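/- arXiv:2007.13611 — 6 statements merged into one kernel-verified Lean document; each statement's English description precedes it below -/
import Mathlib

section
/- Let G be connected and contain at least one cycle (m ≥ n). Let n₁ be the number of vertices of G of degree 1 and let s₁ be the number of vertices of G not in the 2-core of G. Then the dimension of the kernel of B equals n₁, and the multiplicity of 0 as a root of the characteristic polynomial of B equals 2·s₁. -/
open Matrix Polynomial BigOperators Finset

set_option linter.unusedSectionVars false
set_option maxHeartbeats 1000000

variable {V : Type*}

/-- The non-backtracking matrix of a graph `G`, indexed by darts (oriented edges):
`B[(k→l),(i→j)] = 1` if `j = k` and `i ≠ l`, else `0`. -/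
def nbMatrix [DecidableEq V] (G : SimpleGraph V) : Matrix G.Dart G.Dart ℂ :=
  fun e f => if f.snd = e.fst ∧ f.fst ≠ e.snd then 1 else 0

/-- A vertex is in the 2-core of `G` if it belongs to some vertex set `U` every vertex of which
has at least `2` neighbors inside `U`. -/
def InTwoCore (G : SimpleGraph V) (v : V) : Prop :=
  ∃ U : Set V, v ∈ U ∧ ∀ u ∈ U, 2 ≤ {w | w ∈ U ∧ G.Adj u w}.ncard

section
variable [DecidableEq V] [Fintype V] (G : SimpleGraph V) [DecidableRel G.Adj]

noncomputable def Sin (u : V) (x : G.Dart → ℂ) : ℂ :=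
  ∑ f ∈ univ.filter (fun f : G.Dart => f.snd = u), x f

lemma Sin_eq_sum_out (u : V) (x : G.Dart → ℂ) :
    Sin G u x = ∑ e ∈ univ.filter (fun e : G.Dart => e.fst = u), x e.symm := by
  classical
  refine Finset.sum_nbij' (fun f => f.symm) (fun e => e.symm) ?_ ?_ ?_ ?_ ?_
  · intro a ha; simp only [mem_filter, mem_univ, true_and] at ha ⊢; exact ha
  · intro a ha; simp only [mem_filter, mem_univ, true_and] at ha ⊢; exact ha
  · intro a _; exact SimpleGraph.Dart.symm_symm a
  · intro a _; exact SimpleGraph.Dart.symm_symm a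
  · intro a _; rw [SimpleGraph.Dart.symm_symm]

lemma mulVec_nb (x : G.Dart → ℂ) (e : G.Dart) :
    (nbMatrix G).mulVec x e = Sin G e.fst x - x e.symm := by
  classical
  rw [Matrix.mulVec, dotProduct]
  have h1 : ∀ f : G.Dart, nbMatrix G e f * x f
      = if f.snd = e.fst ∧ f.fst ≠ e.snd then x f else 0 := by
    intro f; by_cases h : f.snd = e.fst ∧ f.fst ≠ e.snd <;> simp [nbMatrix, h]
  rw [Finset.sum_congr rfl (fun f _ => h1 f), ← Finset.sum_filter]
  have hset : univ.filter (fun f : G.Dart => f.snd = e.fst ∧ f.fst ≠ e.snd)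
      = (univ.filter (fun f : G.Dart => f.snd = e.fst)).erase e.symm := by
    ext f
    simp only [mem_filter, mem_univ, true_and, mem_erase]
    constructor
    · rintro ⟨h1, h2⟩
      refine ⟨?_, h1⟩
      intro hf; apply h2; rw [hf]; rfl
    · rintro ⟨h2, h1⟩
      refine ⟨h1, ?_⟩
      intro hf; apply h2
      apply SimpleGraph.Dart.ext
      have hf1 : f.toProd.1 = e.toProd.2 := hf
      exact Prod.ext hf1 h1
  rw [hset, Finset.sum_erase_eq_sub]
  · rfl
  · simp only [mem_filter, mem_univ, true_and]; rfl

/-- membership in the kernel -/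
lemma mem_ker_nb_iff (x : G.Dart → ℂ) :
    x ∈ LinearMap.ker (nbMatrix G).mulVecLin
      ↔ ∀ f : G.Dart, G.degree f.snd ≠ 1 → x f = 0 := by
  classical
  rw [LinearMap.mem_ker]
  constructor
  · intro hx f₀ hdeg
    have hfun : ∀ e : G.Dart, (nbMatrix G).mulVec x e = 0 := fun e => congrFun hx e
    set u := f₀.snd with hu
    have key : ∀ e : G.Dart, e.fst = u → x e.symm = Sin G u x := by
      intro e he
      have := hfun e
      rw [mulVec_nb, he] at this
      exact ((sub_eq_zero.mp this)).symm
    -- Sin G u x = deg u * Sin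
    have hS : Sin G u x = (G.degree u : ℂ) * Sin G u x := by
      conv_lhs => rw [Sin_eq_sum_out]
      rw [Finset.sum_congr rfl (fun e he => key e (Finset.mem_filter.mp he).2),
        Finset.sum_const, G.dart_fst_fiber_card_eq_degree u, nsmul_eq_mul]
    have hdeg1 : 1 ≤ G.degree u := by
      rw [← G.dart_fst_fiber_card_eq_degree u]
      exact Finset.card_pos.mpr ⟨f₀.symm, by simp [hu]⟩
    have hScast : ((G.degree u : ℂ) - 1) * Sin G u x = 0 := by linear_combination -hS
    have hSzero : Sin G u x = 0 := by
      rcases mul_eq_zero.mp hScast with h | h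
      · exfalso
        have : (G.degree u : ℂ) = 1 := by linear_combination h
        have : (G.degree u : ℕ) = 1 := by exact_mod_cast this
        exact hdeg (by simpa [hu] using this)
      · exact h
    have := key f₀.symm (by simp [hu])
    rwa [SimpleGraph.Dart.symm_symm, hSzero] at this
  · intro hx
    ext e
    rw [Matrix.mulVecLin_apply, mulVec_nb, Pi.zero_apply]
    by_cases hdeg : G.degree e.fst = 1
    · -- out-fiber of e.fst is {e}
      have hcard : (univ.filter (fun f : G.Dart => f.fst = e.fst)).card = 1 := by
        rw [G.dart_fst_fiber_card_eq_degree e.fst]; exact hdeg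
      have hmem : e ∈ univ.filter (fun f : G.Dart => f.fst = e.fst) := by simp
      have hsingle : univ.filter (fun f : G.Dart => f.fst = e.fst) = {e} :=
        Finset.eq_singleton_iff_unique_mem.mpr ⟨hmem, fun y hy =>
          Finset.card_le_one.mp (le_of_eq hcard) y hy e hmem⟩
      rw [Sin_eq_sum_out, hsingle, Finset.sum_singleton, sub_self]
    · have h1 : x e.symm = 0 := hx e.symm hdeg
      have h2 : Sin G e.fst x = 0 := by
        rw [Sin_eq_sum_out]
        refine Finset.sum_eq_zero (fun f hf => ?_)
        refine hx f.symm ?_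
        have : f.fst = e.fst := (Finset.mem_filter.mp hf).2
        show G.degree f.symm.snd ≠ 1
        have hfs : f.symm.snd = f.fst := rfl
        rw [hfs, this]; exact hdeg
      rw [h1, h2, sub_zero]
end

section
variable [DecidableEq V] [Fintype V] (G : SimpleGraph V) [DecidableRel G.Adj]

lemma finrank_ker_nb :
    Module.finrank ℂ ↥(LinearMap.ker (nbMatrix G).mulVecLin)
      = {v : V | G.degree v = 1}.ncard := by
  classical
  set S := {f : G.Dart // G.degree f.snd = 1}
  -- restriction map
  let res : ↥(LinearMap.ker (nbMatrix G).mulVecLin) →ₗ[ℂ] (S → ℂ) :=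
    (LinearMap.funLeft ℂ ℂ (Subtype.val : S → G.Dart)).comp
      (Submodule.subtype _)
  have hbij : Function.Bijective res := by
    constructor
    · intro x y hxy
      ext f
      by_cases h : G.degree f.snd = 1
      · exact congrFun hxy ⟨f, h⟩
      · rw [(mem_ker_nb_iff G x.1).mp x.2 f h, (mem_ker_nb_iff G y.1).mp y.2 f h]
    · intro y
      refine ⟨⟨fun f => if h : G.degree f.snd = 1 then y ⟨f, h⟩ else 0, ?_⟩, ?_⟩
      · rw [mem_ker_nb_iff]
        intro f hf
        simp [hf]
      · ext ⟨f, hf⟩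
        simp [res, LinearMap.funLeft, hf]
  have h1 : Module.finrank ℂ ↥(LinearMap.ker (nbMatrix G).mulVecLin)
      = Module.finrank ℂ (S → ℂ) := (LinearEquiv.ofBijective res hbij).finrank_eq
  rw [h1, Module.finrank_pi]
  -- card S = ncard {v | deg v = 1}
  have hcard : Fintype.card S = Fintype.card {v : V // G.degree v = 1} := by
    refine Fintype.card_congr (Equiv.ofBijective (fun f => ⟨f.1.snd, f.2⟩) ⟨?_, ?_⟩)
    · rintro ⟨f₁, h₁⟩ ⟨f₂, h₂⟩ h
      have hsnd : f₁.snd = f₂.snd := congrArg Subtype.val h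
      have hone : (G.neighborFinset f₁.snd).card = 1 := by
        rw [G.card_neighborFinset_eq_degree]; exact h₁
      obtain ⟨a, ha⟩ := Finset.card_eq_one.mp hone
      have m₁ : f₁.fst ∈ G.neighborFinset f₁.snd := by
        rw [SimpleGraph.mem_neighborFinset]; exact f₁.adj.symm
      have m₂ : f₂.fst ∈ G.neighborFinset f₁.snd := by
        rw [hsnd, SimpleGraph.mem_neighborFinset]; exact f₂.adj.symm
      rw [ha, Finset.mem_singleton] at m₁ m₂
      apply Subtype.ext
      apply SimpleGraph.Dart.ext
      exact Prod.ext (m₁.trans m₂.symm) hsnd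
    · rintro ⟨v, hv⟩
      have hone : (G.neighborFinset v).card = 1 := by
        rw [G.card_neighborFinset_eq_degree]; exact hv
      obtain ⟨a, ha⟩ := Finset.card_eq_one.mp hone
      have hav : G.Adj v a := by
        rw [← SimpleGraph.mem_neighborFinset, ha]; exact Finset.mem_singleton_self a
      exact ⟨⟨⟨(a, v), hav.symm⟩, hv⟩, rfl⟩
  rw [hcard, ← Nat.card_coe_set_eq, Nat.card_eq_fintype_card]
  rfl
end

section
variable [DecidableEq V] [Fintype V] (G : SimpleGraph V) [DecidableRel G.Adj]

lemma cycle_two_nbrs {u : V} (d : G.Walk u u) (hd : d.IsCycle) :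
    ∃ a b : V, a ≠ b ∧ G.Adj u a ∧ G.Adj u b ∧ a ∈ d.support ∧ b ∈ d.support := by
  classical
  cases d with
  | nil => exact absurd rfl hd.ne_nil
  | @cons _ a _ h p =>
    obtain ⟨hp, he⟩ := (SimpleGraph.Walk.cons_isCycle_iff p h).mp hd
    have hlen : 2 ≤ p.length := by
      have := hd.three_le_length
      simp only [SimpleGraph.Walk.length_cons] at this
      omega
    have hrevnil : ¬ p.reverse.Nil := by
      rw [SimpleGraph.Walk.nil_iff_length_eq, SimpleGraph.Walk.length_reverse]
      omega
    obtain ⟨b, hb, q, hq⟩ := SimpleGraph.Walk.not_nil_iff.mp hrevnil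
    have hedge : s(u, b) ∈ p.edges := by
      have : s(u, b) ∈ p.reverse.edges := by
        rw [hq, SimpleGraph.Walk.edges_cons]; exact List.mem_cons_self
      rwa [SimpleGraph.Walk.edges_reverse, List.mem_reverse] at this
    have hbsupp : b ∈ p.support := p.snd_mem_support_of_mem_edges hedge
    refine ⟨a, b, ?_, h, hb, ?_, ?_⟩
    · rintro rfl; exact he hedge
    · rw [SimpleGraph.Walk.support_cons]; exact List.mem_cons_of_mem _ p.start_mem_support
    · rw [SimpleGraph.Walk.support_cons]; exact List.mem_cons_of_mem _ hbsupp

lemma cycle_support_good {v : V} (c : G.Walk v v) (hc : c.IsCycle) :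
    ∀ u ∈ {x | x ∈ c.support}, 2 ≤ {w | w ∈ {x | x ∈ c.support} ∧ G.Adj u w}.ncard := by
  intro u hu
  obtain ⟨a, b, hab, ha, hb, has, hbs⟩ := cycle_two_nbrs G (c.rotate u hu) (hc.rotate hu)
  have htrans : ∀ x, x ∈ (c.rotate u hu).support → x ∈ c.support := by
    intro x hx
    rw [SimpleGraph.Walk.support_eq_cons] at hx
    rcases List.mem_cons.mp hx with rfl | hx
    · exact hu
    · exact List.mem_of_mem_tail
        (((SimpleGraph.Walk.support_rotate c u hu).mem_iff).mp hx)
  have hsub : ({a, b} : Set V) ⊆ {w | w ∈ {x | x ∈ c.support} ∧ G.Adj u w} := by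
    rintro x (rfl | rfl)
    · exact ⟨htrans _ has, ha⟩
    · exact ⟨htrans _ hbs, hb⟩
  calc 2 = ({a, b} : Set V).ncard := (Set.ncard_pair hab).symm
    _ ≤ _ := Set.ncard_le_ncard hsub (Set.toFinite _)

lemma core_nonempty (hconn : G.Connected) (hm : Fintype.card V ≤ G.edgeFinset.card) :
    ∃ v, InTwoCore G v := by
  have hnac : ¬ G.IsAcyclic := by
    intro hac
    have ht : G.IsTree := ⟨hconn, hac⟩
    have := ht.card_edgeFinset
    have hpos : 0 < Fintype.card V := Fintype.card_pos_iff.mpr hconn.nonempty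
    omega
  simp only [SimpleGraph.IsAcyclic, not_forall, not_not] at hnac
  obtain ⟨v, c, hc⟩ := hnac
  exact ⟨v, {x | x ∈ c.support}, c.start_mem_support, cycle_support_good G c hc⟩
end

section
variable [DecidableEq V] [Fintype V] (G : SimpleGraph V) [DecidableRel G.Adj]

lemma core_good : ∀ v, InTwoCore G v → 2 ≤ {w | InTwoCore G w ∧ G.Adj v w}.ncard := by
  rintro v ⟨U, hvU, hU⟩
  refine le_trans (hU v hvU) (Set.ncard_le_ncard ?_ (Set.toFinite _))
  rintro w ⟨h1, h2⟩
  exact ⟨⟨U, h1, hU⟩, h2⟩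

/-- distance to the two-core -/
noncomputable def dc : V → ℕ := fun v => sInf ((fun c => G.dist v c) '' {c | InTwoCore G c})

variable (hconn : G.Connected) (hcne : ∃ c, InTwoCore G c)

include hcne in
lemma dc_exists (v : V) : ∃ c, InTwoCore G c ∧ G.dist v c = dc G v := by
  obtain ⟨c, hc⟩ := hcne
  have hne : ((fun c => G.dist v c) '' {c | InTwoCore G c}).Nonempty := ⟨_, ⟨c, hc, rfl⟩⟩
  obtain ⟨c', hc', hd⟩ := Nat.sInf_mem hne
  exact ⟨c', hc', hd⟩

lemma dc_le {c : V} (hc : InTwoCore G c) (v : V) : dc G v ≤ G.dist v c :=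
  Nat.sInf_le ⟨c, hc, rfl⟩

include hconn hcne in
lemma dc_eq_zero_iff {v : V} : dc G v = 0 ↔ InTwoCore G v := by
  constructor
  · intro h
    obtain ⟨c, hc, hd⟩ := dc_exists G hcne v
    rw [h] at hd
    rwa [(hconn.dist_eq_zero_iff).mp hd]
  · intro h
    have h2 := dc_le G h v
    rw [SimpleGraph.dist_self] at h2
    omega

include hconn in
lemma dc_le_succ_of_adj {v w : V} (hcw : ∃ c, InTwoCore G c) (h : G.Adj v w) :
    dc G v ≤ dc G w + 1 := by
  obtain ⟨c, hc, hd⟩ := dc_exists G hcw w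
  calc dc G v ≤ G.dist v c := dc_le G hc v
    _ ≤ G.dist v w + G.dist w c := hconn.dist_triangle
    _ = 1 + dc G w := by rw [SimpleGraph.dist_eq_one_iff_adj.mpr h, hd]
    _ = dc G w + 1 := by omega

include hconn hcne in
lemma exists_parent {v : V} (hv : ¬ InTwoCore G v) :
    ∃ w, G.Adj v w ∧ dc G w + 1 = dc G v := by
  have h0 : dc G v ≠ 0 := fun h => hv ((dc_eq_zero_iff G hconn hcne).mp h)
  obtain ⟨c, hc, hd⟩ := dc_exists G hcne v
  obtain ⟨p, hp⟩ := (hconn v c).exists_walk_length_eq_dist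
  have hlen : p.length = dc G v := by rw [hp, hd]
  cases p with
  | nil => simp at hlen; omega
  | @cons _ w _ h q =>
    have hq : q.length + 1 = dc G v := by simpa using hlen
    have h1 : dc G w ≤ q.length := le_trans (dc_le G hc w) (SimpleGraph.dist_le q)
    have h2 : dc G v ≤ dc G w + 1 := dc_le_succ_of_adj G hconn hcne h
    exact ⟨w, h, by omega⟩

include hconn hcne in
lemma descent : ∀ (k : ℕ) (v : V), dc G v = k →
    ∃ (c : V) (p : G.Walk v c), p.length = k ∧ ∀ i, i ≤ k → dc G (p.getVert i) = k - i := by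
  intro k
  induction k with
  | zero =>
    intro v hv
    exact ⟨v, SimpleGraph.Walk.nil, rfl, fun i hi => by
      interval_cases i; simpa using hv⟩
  | succ k ih =>
    intro v hv
    have hv' : ¬ InTwoCore G v := by
      intro h
      rw [← dc_eq_zero_iff G hconn hcne] at h
      omega
    obtain ⟨w, hadj, hw⟩ := exists_parent G hconn hcne hv'
    obtain ⟨c, q, hql, hqd⟩ := ih w (by omega)
    refine ⟨c, SimpleGraph.Walk.cons hadj q, by simpa using hql, ?_⟩
    intro i hi
    cases i with
    | zero => simpa using hv
    | succ i =>
      rw [SimpleGraph.Walk.getVert_cons_succ]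
      have := hqd i (by omega)
      omega
end

section
variable [DecidableEq V] [Fintype V] (G : SimpleGraph V) [DecidableRel G.Adj]
variable (hconn : G.Connected) (hcne : ∃ c, InTwoCore G c)

include hconn hcne in
lemma low_nbr_unique {v : V} (hv : ¬ InTwoCore G v) {w₁ w₂ : V}
    (h1 : G.Adj v w₁) (h2 : G.Adj v w₂) (hd1 : dc G w₁ ≤ dc G v) (hd2 : dc G w₂ ≤ dc G v) :
    w₁ = w₂ := by
  classical
  by_contra hne
  obtain ⟨c₁, p₁, hl₁, hdv₁⟩ := descent G hconn hcne (dc G w₁) w₁ rfl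
  obtain ⟨c₂, p₂, hl₂, hdv₂⟩ := descent G hconn hcne (dc G w₂) w₂ rfl
  set U : Set V := {v} ∪ {x | x ∈ p₁.support} ∪ {x | x ∈ p₂.support} ∪ {x | InTwoCore G x}
    with hUdef
  -- helper: a walk-descent vertex is good
  have hgood : ∀ u ∈ U, 2 ≤ {w | w ∈ U ∧ G.Adj u w}.ncard := by
    have hwalk : ∀ (w : V) (c : V) (p : G.Walk w c), p.length = dc G w →
        (∀ i, i ≤ p.length → dc G (p.getVert i) = p.length - i) →
        G.Adj v w → dc G w ≤ dc G v → ({x | x ∈ p.support} : Set V) ⊆ U →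
        ∀ u ∈ p.support, ¬ InTwoCore G u → 2 ≤ {w | w ∈ U ∧ G.Adj u w}.ncard := by
      intro w c p hpl hpd hvw hwv hsub u hu hucore
      obtain ⟨i, hgv, hile⟩ := SimpleGraph.Walk.mem_support_iff_exists_getVert.mp hu
      have hdcu : dc G u = p.length - i := by rw [← hgv]; exact hpd i hile
      have hdcu0 : dc G u ≠ 0 := fun h => hucore ((dc_eq_zero_iff G hconn hcne).mp h)
      have hilt : i < p.length := by omega
      -- two neighbors a, b
      have hmem_next : p.getVert (i+1) ∈ p.support :=
        SimpleGraph.Walk.mem_support_iff_exists_getVert.mpr ⟨i+1, rfl, by omega⟩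
      have hadj_next : G.Adj u (p.getVert (i+1)) := by
        rw [← hgv]; exact p.adj_getVert_succ hilt
      have hdc_next : dc G (p.getVert (i+1)) = p.length - (i+1) := hpd (i+1) (by omega)
      rcases Nat.eq_zero_or_pos i with rfl | hipos
      · -- u = w: neighbors v and getVert 1
        have huw : u = w := by rw [← hgv, SimpleGraph.Walk.getVert_zero]
        have hne' : v ≠ p.getVert 1 := by
          intro h
          have : dc G v = p.length - 1 := by rw [h]; exact hdc_next
          omega
        have hsubpair : ({v, p.getVert 1} : Set V) ⊆ {w | w ∈ U ∧ G.Adj u w} := by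
          rintro x (rfl | rfl)
          · exact ⟨Or.inl (Or.inl (Or.inl rfl)), huw ▸ hvw.symm⟩
          · exact ⟨hsub hmem_next, hadj_next⟩
        calc 2 = ({v, p.getVert 1} : Set V).ncard := (Set.ncard_pair hne').symm
          _ ≤ _ := Set.ncard_le_ncard hsubpair (Set.toFinite _)
      · -- interior: neighbors getVert (i-1), getVert (i+1)
        have hmem_prev : p.getVert (i-1) ∈ p.support :=
          SimpleGraph.Walk.mem_support_iff_exists_getVert.mpr ⟨i-1, rfl, by omega⟩
        have hadj_prev : G.Adj u (p.getVert (i-1)) := by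
          have := p.adj_getVert_succ (i := i-1) (by omega)
          rw [show i - 1 + 1 = i by omega, hgv] at this
          exact this.symm
        have hdc_prev : dc G (p.getVert (i-1)) = p.length - (i-1) := hpd (i-1) (by omega)
        have hne' : p.getVert (i-1) ≠ p.getVert (i+1) := by
          intro h
          rw [h, hdc_next] at hdc_prev
          omega
        have hsubpair : ({p.getVert (i-1), p.getVert (i+1)} : Set V)
            ⊆ {w | w ∈ U ∧ G.Adj u w} := by
          rintro x (rfl | rfl)
          · exact ⟨hsub hmem_prev, hadj_prev⟩
          · exact ⟨hsub hmem_next, hadj_next⟩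
        calc 2 = ({p.getVert (i-1), p.getVert (i+1)} : Set V).ncard := (Set.ncard_pair hne').symm
          _ ≤ _ := Set.ncard_le_ncard hsubpair (Set.toFinite _)
    intro u hu
    by_cases hucore : InTwoCore G u
    · refine le_trans (core_good G u hucore) (Set.ncard_le_ncard ?_ (Set.toFinite _))
      rintro x ⟨hx1, hx2⟩
      exact ⟨Or.inr hx1, hx2⟩
    · rcases hu with ((rfl | hu1) | hu2) | hucore'
      · -- u = v
        have hsubpair : ({w₁, w₂} : Set V) ⊆ {w | w ∈ U ∧ G.Adj u w} := by
          rintro x (rfl | rfl)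
          · exact ⟨Or.inl (Or.inl (Or.inr p₁.start_mem_support)), h1⟩
          · exact ⟨Or.inl (Or.inr p₂.start_mem_support), h2⟩
        calc 2 = ({w₁, w₂} : Set V).ncard := (Set.ncard_pair hne).symm
          _ ≤ _ := Set.ncard_le_ncard hsubpair (Set.toFinite _)
      · exact hwalk w₁ c₁ p₁ hl₁ (by rw [hl₁]; exact hdv₁) h1 hd1
          (fun x hx => Or.inl (Or.inl (Or.inr hx))) u hu1 hucore
      · exact hwalk w₂ c₂ p₂ hl₂ (by rw [hl₂]; exact hdv₂) h2 hd2
          (fun x hx => Or.inl (Or.inr hx)) u hu2 hucore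
      · exact absurd hucore' hucore
  exact hv ⟨U, Or.inl (Or.inl (Or.inl rfl)), hgood⟩
end


section
variable [DecidableEq V] [Fintype V] (G : SimpleGraph V) [DecidableRel G.Adj]

/-- potential function on darts -/
noncomputable def bfn (e : G.Dart) : ℤ :=
  if dc G e.fst = 0 ∧ dc G e.snd = 0 then 0
  else if dc G e.snd < dc G e.fst then (Fintype.card V : ℤ) + dc G e.snd
  else - (dc G e.snd)

variable (hconn : G.Connected) (hcne : ∃ c, InTwoCore G c)

lemma bfn_eq_zero_iff (e : G.Dart) :
    bfn G e = 0 ↔ dc G e.fst = 0 ∧ dc G e.snd = 0 := by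
  unfold bfn
  split_ifs with h1 h2
  · simp [h1]
  · have : 0 < Fintype.card V := Fintype.card_pos_iff.mpr ⟨e.fst⟩
    constructor
    · intro h; exfalso; omega
    · intro h; exact absurd h h1
  · constructor
    · intro h
      have hsnd : dc G e.snd = 0 := by omega
      have hfst : dc G e.fst = 0 := by omega
      exact ⟨hfst, hsnd⟩
    · intro h; exact absurd h h1

include hconn hcne in
lemma dc_dart_ne (e : G.Dart) (h : 0 < dc G e.fst) : dc G e.snd ≠ dc G e.fst := by
  intro heq
  have hfshell : ¬ InTwoCore G e.fst := by
    intro hc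
    rw [← dc_eq_zero_iff G hconn hcne] at hc
    omega
  obtain ⟨w, hw, hwd⟩ := exists_parent G hconn hcne hfshell
  have := low_nbr_unique G hconn hcne hfshell e.adj hw (by omega) (by omega)
  rw [this] at heq
  omega

lemma bfn_core_val (e : G.Dart) (h1 : dc G e.fst = 0) (h2 : dc G e.snd = 0) :
    bfn G e = 0 := by unfold bfn; rw [if_pos ⟨h1, h2⟩]

lemma bfn_down_val (e : G.Dart) (h : dc G e.snd < dc G e.fst) :
    bfn G e = (Fintype.card V : ℤ) + dc G e.snd := by
  unfold bfn
  rw [if_neg (by omega), if_pos h]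

lemma bfn_up_val (e : G.Dart) (h0 : ¬ (dc G e.fst = 0 ∧ dc G e.snd = 0))
    (h : ¬ dc G e.snd < dc G e.fst) : bfn G e = - dc G e.snd := by
  unfold bfn
  rw [if_neg h0, if_neg h]

include hconn hcne in
lemma bfn_triangular {e f : G.Dart} (hB : f.snd = e.fst ∧ f.fst ≠ e.snd) :
    (bfn G e = 0 ∧ bfn G f = 0) ∨ bfn G e < bfn G f := by
  obtain ⟨hfs, hne⟩ := hB
  have hadj_ij : G.Adj f.fst e.fst := hfs ▸ f.adj
  have hadj_jl : G.Adj e.fst e.snd := e.adj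
  have hN : 0 < Fintype.card V := Fintype.card_pos_iff.mpr ⟨e.fst⟩
  have hbd1 : dc G f.fst ≤ dc G e.fst + 1 := dc_le_succ_of_adj G hconn hcne hadj_ij
  have hbd2 : dc G e.fst ≤ dc G f.fst + 1 := dc_le_succ_of_adj G hconn hcne hadj_ij.symm
  have hbd3 : dc G e.snd ≤ dc G e.fst + 1 := dc_le_succ_of_adj G hconn hcne hadj_jl.symm
  have hbd4 : dc G e.fst ≤ dc G e.snd + 1 := dc_le_succ_of_adj G hconn hcne hadj_jl
  have hfsnd : dc G f.snd = dc G e.fst := by rw [hfs]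
  by_cases hj0 : dc G e.fst = 0
  · by_cases hl0 : dc G e.snd = 0
    · by_cases hi0 : dc G f.fst = 0
      · exact Or.inl ⟨bfn_core_val G e hj0 hl0, bfn_core_val G f hi0 (hfsnd.trans hj0)⟩
      · right
        rw [bfn_core_val G e hj0 hl0, bfn_down_val G f (by omega)]
        push_cast
        omega
    · right
      rw [bfn_up_val G e (by omega) (by omega)]
      by_cases hi0 : dc G f.fst = 0
      · rw [bfn_core_val G f hi0 (hfsnd.trans hj0)]
        omega
      · rw [bfn_down_val G f (by omega)]
        push_cast
        omega
  · right
    have hjshell : ¬ InTwoCore G e.fst := by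
      intro hc; rw [← dc_eq_zero_iff G hconn hcne] at hc; omega
    by_cases hel : dc G e.snd < dc G e.fst
    · -- e down; then f.fst cannot be low
      have hilow : ¬ dc G f.fst ≤ dc G e.fst := by
        intro hle
        exact hne (low_nbr_unique G hconn hcne hjshell hadj_ij.symm hadj_jl hle
          (by omega))
      rw [bfn_down_val G e hel, bfn_down_val G f (by omega)]
      push_cast
      omega
    · rw [bfn_up_val G e (by omega) hel]
      by_cases hfi : dc G e.fst < dc G f.fst
      · rw [bfn_down_val G f (by omega)]
        push_cast
        omega
      · rw [bfn_up_val G f (by omega) (by omega)]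
        have hllow : ¬ dc G e.snd ≤ dc G e.fst := by
          intro hle
          exact hne (low_nbr_unique G hconn hcne hjshell hadj_ij.symm hadj_jl
            (by omega) hle)
        omega

include hconn hcne in
lemma nb_blockTriangular : (nbMatrix G).BlockTriangular (bfn G) := by
  intro e f h
  by_cases hB : f.snd = e.fst ∧ f.fst ≠ e.snd
  · rcases bfn_triangular G hconn hcne hB with ⟨h1, h2⟩ | hlt
    · rw [h1, h2] at h; exact absurd h (lt_irrefl _)
    · exact absurd h (not_lt.mpr (le_of_lt hlt))
  · simp [nbMatrix, hB]

include hconn hcne in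
lemma nb_block_zero {a : ℤ} (ha : a ≠ 0) :
    (nbMatrix G).toSquareBlock (bfn G) a = 0 := by
  ext ⟨e, he⟩ ⟨f, hf⟩
  show nbMatrix G e f = 0
  by_cases hB : f.snd = e.fst ∧ f.fst ≠ e.snd
  · rcases bfn_triangular G hconn hcne hB with ⟨h1, _⟩ | hlt
    · rw [h1] at he; exact absurd he.symm ha
    · rw [he, hf] at hlt; exact absurd hlt (lt_irrefl _)
  · simp [nbMatrix, hB]
end

lemma charpoly_zero_mat {m : Type*} [DecidableEq m] [Fintype m] :
    (0 : Matrix m m ℂ).charpoly = X ^ (Fintype.card m) := by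
  have h : Matrix.charmatrix (0 : Matrix m m ℂ) = Matrix.diagonal (fun _ => (X : ℂ[X])) := by
    ext i j
    by_cases h : i = j
    · subst h; rw [Matrix.charmatrix_apply_eq]; simp [Matrix.diagonal]
    · rw [Matrix.charmatrix_apply_ne _ _ _ h]; simp [Matrix.diagonal, h]
  rw [Matrix.charpoly, h, Matrix.det_diagonal, Finset.prod_const, Finset.card_univ]

section
variable [DecidableEq V] [Fintype V] (G : SimpleGraph V) [DecidableRel G.Adj]
variable (hconn : G.Connected) (hcne : ∃ c, InTwoCore G c)

include hconn hcne in
lemma exists_core_dart : ∃ e : G.Dart, bfn G e = 0 := by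
  have hcne2 := hcne
  obtain ⟨v, hv⟩ := hcne2
  have h2 := core_good G v hv
  have hne : {w | InTwoCore G w ∧ G.Adj v w}.Nonempty := by
    rw [← Set.ncard_pos (Set.toFinite _)] at *
    omega
  obtain ⟨w, hw, hadj⟩ := hne
  refine ⟨⟨(v, w), hadj⟩, ?_⟩
  rw [bfn_eq_zero_iff]
  exact ⟨(dc_eq_zero_iff G hconn hcne).mpr hv, (dc_eq_zero_iff G hconn hcne).mpr hw⟩

include hconn hcne in
lemma nb_charpoly_eq :
    (nbMatrix G).charpoly
      = ((nbMatrix G).toSquareBlock (bfn G) 0).charpoly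
        * X ^ (Finset.univ.filter (fun e : G.Dart => bfn G e ≠ 0)).card := by
  classical
  rw [(nb_blockTriangular G hconn hcne).charpoly]
  have h0 : (0 : ℤ) ∈ Finset.univ.image (bfn G) := by
    obtain ⟨e, he⟩ := exists_core_dart G hconn hcne
    exact Finset.mem_image.mpr ⟨e, Finset.mem_univ e, he⟩
  rw [← Finset.mul_prod_erase _ _ h0]
  congr 1
  have hblock : ∀ a ∈ (Finset.univ.image (bfn G)).erase 0,
      ((nbMatrix G).toSquareBlock (bfn G) a).charpoly
        = X ^ (Finset.univ.filter (fun e : G.Dart => bfn G e = a)).card := by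
    intro a ha
    have ha0 : a ≠ 0 := Finset.ne_of_mem_erase ha
    rw [nb_block_zero G hconn hcne ha0, charpoly_zero_mat]
    congr 1
    rw [Fintype.card_subtype]
  rw [Finset.prod_congr rfl hblock, Finset.prod_pow_eq_pow_sum]
  congr 1
  rw [Finset.card_eq_sum_card_fiberwise
    (f := bfn G) (t := (Finset.univ.image (bfn G)).erase 0) ?_]
  · refine Finset.sum_congr rfl (fun a ha => ?_)
    congr 1
    ext e
    simp only [Finset.mem_filter, Finset.mem_univ, true_and]
    have ha0 : a ≠ 0 := Finset.ne_of_mem_erase ha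
    constructor
    · intro h
      exact ⟨by rw [h]; exact ha0, h⟩
    · intro h
      exact h.2
  · intro e he
    have he' : bfn G e ≠ 0 := by simpa using he
    exact Finset.mem_coe.mpr (Finset.mem_erase.mpr ⟨he', Finset.mem_image.mpr ⟨e, Finset.mem_univ e, rfl⟩⟩)
end


section
variable [DecidableEq V] [Fintype V] (G : SimpleGraph V) [DecidableRel G.Adj]
variable (hconn : G.Connected) (hcne : ∃ c, InTwoCore G c)

lemma bfn_symm_zero {e : G.Dart} (he : bfn G e = 0) : bfn G e.symm = 0 := by
  rw [bfn_eq_zero_iff] at he ⊢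
  exact ⟨he.2, he.1⟩

include hconn hcne in
lemma core_block_det_ne_zero :
    ((nbMatrix G).toSquareBlock (bfn G) 0).det ≠ 0 := by
  classical
  intro hdet
  obtain ⟨x, hx0, hxv⟩ := (Matrix.exists_mulVec_eq_zero_iff).mpr hdet
  apply hx0
  -- extend x by zero
  set y : G.Dart → ℂ := fun e => if h : bfn G e = 0 then x ⟨e, h⟩ else 0 with hy
  have hYnb : ∀ (e : G.Dart), bfn G e = 0 → Sin G e.fst y - y e.symm = 0 := by
    intro e he
    have h1 : ((nbMatrix G).toSquareBlock (bfn G) 0).mulVec x ⟨e, he⟩ = 0 := by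
      rw [hxv]; rfl
    have h2 : (nbMatrix G).mulVec y e
        = ((nbMatrix G).toSquareBlock (bfn G) 0).mulVec x ⟨e, he⟩ := by
      rw [Matrix.mulVec, Matrix.mulVec, dotProduct, dotProduct]
      rw [← Finset.sum_filter_add_sum_filter_not Finset.univ (fun f : G.Dart => bfn G f = 0)
        (fun f => nbMatrix G e f * y f)]
      have hz : ∑ i ∈ Finset.univ.filter (fun f : G.Dart => ¬ bfn G f = 0),
          nbMatrix G e i * y i = 0 := by
        refine Finset.sum_eq_zero (fun i hi => ?_)
        rw [Finset.mem_filter] at hi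
        rw [hy]
        simp [hi.2]
      rw [hz, add_zero]
      rw [Finset.sum_subtype (p := fun f : G.Dart => bfn G f = 0)
        (Finset.univ.filter (fun f : G.Dart => bfn G f = 0))
        (by intro f; simp) (fun f : G.Dart => nbMatrix G e f * y f)]
      refine Finset.sum_congr rfl (fun f _ => ?_)
      show nbMatrix G e f.1 * y f.1 = _
      rw [hy]
      simp only [f.2, dif_pos]
      rfl
    rw [← mulVec_nb, h2, h1]
  -- now show y vanishes on all core darts
  funext f
  have hf := f.2
  set u := (f : G.Dart).snd with hu
  have hucore : dc G u = 0 := ((bfn_eq_zero_iff G f.1).mp hf).2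
  have key : ∀ e : G.Dart, e.fst = u → bfn G e = 0 → y e.symm = Sin G u y := by
    intro e he hbe
    have := hYnb e hbe
    rw [he] at this
    exact (sub_eq_zero.mp this).symm
  have hSelf : Sin G u y
      = ((Finset.univ.filter (fun e : G.Dart => e.fst = u ∧ bfn G e = 0)).card : ℂ)
        * Sin G u y := by
    conv_lhs => rw [Sin_eq_sum_out]
    have hsplit : ∀ e ∈ Finset.univ.filter (fun e : G.Dart => e.fst = u),
        y e.symm = if bfn G e = 0 then Sin G u y else 0 := by
      intro e he
      rw [Finset.mem_filter] at he
      by_cases hbe : bfn G e = 0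
      · rw [if_pos hbe]; exact key e he.2 hbe
      · rw [if_neg hbe, hy]
        have : ¬ bfn G e.symm = 0 := fun h => hbe (by
          have := bfn_symm_zero G h
          rwa [SimpleGraph.Dart.symm_symm] at this)
        simp [this]
    rw [Finset.sum_congr rfl hsplit, ← Finset.sum_filter, Finset.sum_const,
      Finset.filter_filter, nsmul_eq_mul]
  -- the number of core darts out of u is ≥ 2
  have hcard2 : 2 ≤ (Finset.univ.filter (fun e : G.Dart => e.fst = u ∧ bfn G e = 0)).card := by
    have hu2core : InTwoCore G u := (dc_eq_zero_iff G hconn hcne).mp hucore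
    have h2 := core_good G u hu2core
    have : {w | InTwoCore G w ∧ G.Adj u w}.ncard
        ≤ (Finset.univ.filter (fun e : G.Dart => e.fst = u ∧ bfn G e = 0)).card := by
      rw [← Nat.card_coe_set_eq, Nat.card_eq_fintype_card, ← Fintype.card_subtype]
      refine Fintype.card_le_of_injective
        (fun w => ⟨⟨(u, w.1), w.2.2⟩, ?_, ?_⟩) ?_
      · rfl
      · rw [bfn_eq_zero_iff]
        exact ⟨hucore, (dc_eq_zero_iff G hconn hcne).mpr w.2.1⟩
      · intro w₁ w₂ h
        have := congrArg (fun z => (z : {e : G.Dart // e.fst = u ∧ bfn G e = 0}).1.snd) h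
        exact Subtype.ext this
    omega
  have hSzero : Sin G u y = 0 := by
    by_contra hS
    have hc1 : ((Finset.univ.filter (fun e : G.Dart => e.fst = u ∧ bfn G e = 0)).card : ℂ)
        = 1 := mul_right_cancel₀ hS (by rw [one_mul, ← hSelf])
    have hc1' : (Finset.univ.filter (fun e : G.Dart => e.fst = u ∧ bfn G e = 0)).card = 1 := by
      exact_mod_cast hc1
    omega
  -- conclude
  have hfy : y f.1 = 0 := by
    have hsymm : ((f : G.Dart).symm).fst = u := rfl
    have hbsymm : bfn G (f : G.Dart).symm = 0 := bfn_symm_zero G f.2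
    have := key (f : G.Dart).symm hsymm hbsymm
    rw [SimpleGraph.Dart.symm_symm, hSzero] at this
    exact this
  rw [hy] at hfy
  simp only [f.2, dif_pos] at hfy
  rw [show x f = x ⟨f.1, f.2⟩ from rfl]
  exact hfy
end

section
variable [DecidableEq V] [Fintype V] (G : SimpleGraph V) [DecidableRel G.Adj]
variable (hconn : G.Connected) (hcne : ∃ c, InTwoCore G c)

include hconn hcne in
lemma count_noncore_darts :
    (Finset.univ.filter (fun e : G.Dart => bfn G e ≠ 0)).card
      = 2 * {v : V | ¬ InTwoCore G v}.ncard := by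
  classical
  set Dd := Finset.univ.filter (fun e : G.Dart => dc G e.snd < dc G e.fst) with hDd
  set Du := Finset.univ.filter (fun e : G.Dart => dc G e.fst < dc G e.snd) with hDu
  have h1 : Finset.univ.filter (fun e : G.Dart => bfn G e ≠ 0) = Dd ∪ Du := by
    ext e
    simp only [hDd, hDu, Finset.mem_union, Finset.mem_filter, Finset.mem_univ, true_and, Ne,
      bfn_eq_zero_iff]
    constructor
    · intro h
      rcases lt_trichotomy (dc G e.snd) (dc G e.fst) with hlt | heq | hgt
      · exact Or.inl hlt
      · exfalso
        by_cases h0 : dc G e.fst = 0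
        · exact h ⟨h0, heq.trans h0⟩
        · exact dc_dart_ne G hconn hcne e (by omega) heq
      · exact Or.inr hgt
    · rintro (h | h) ⟨h1, h2⟩ <;> omega
  have h2 : Disjoint Dd Du := by
    rw [Finset.disjoint_left]
    intro e he1 he2
    simp only [hDd, hDu, Finset.mem_filter] at he1 he2
    omega
  have h4 : Du.card = Dd.card := by
    refine Finset.card_bij' (fun e _ => e.symm) (fun e _ => e.symm) ?_ ?_ ?_ ?_
    · intro e he
      simp only [hDd, hDu, Finset.mem_filter, Finset.mem_univ, true_and] at he ⊢
      exact he
    · intro e he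
      simp only [hDd, hDu, Finset.mem_filter, Finset.mem_univ, true_and] at he ⊢
      exact he
    · intro e _; exact SimpleGraph.Dart.symm_symm e
    · intro e _; exact SimpleGraph.Dart.symm_symm e
  have h5 : Dd.card = (Finset.univ.filter (fun v : V => ¬ InTwoCore G v)).card := by
    refine Finset.card_bij (fun e _ => e.fst) ?_ ?_ ?_
    · intro e he
      simp only [hDd, Finset.mem_filter, Finset.mem_univ, true_and] at he ⊢
      intro hc
      rw [← dc_eq_zero_iff G hconn hcne] at hc
      omega
    · intro e₁ he₁ e₂ he₂ heq'
      have heq : e₁.fst = e₂.fst := heq'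
      simp only [hDd, Finset.mem_filter, Finset.mem_univ, true_and] at he₁ he₂
      have hv : ¬ InTwoCore G e₁.fst := by
        intro hc
        rw [← dc_eq_zero_iff G hconn hcne] at hc
        omega
      have hadj2 : G.Adj e₁.fst e₂.snd := heq ▸ e₂.adj
      have hsnd : e₁.snd = e₂.snd :=
        low_nbr_unique G hconn hcne hv e₁.adj hadj2 (by omega) (by rw [heq]; omega)
      exact SimpleGraph.Dart.ext _ _ (Prod.ext heq hsnd)
    · intro v hv
      simp only [Finset.mem_filter, Finset.mem_univ, true_and] at hv
      obtain ⟨w, hadj, hw⟩ := exists_parent G hconn hcne hv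
      have hv0 : dc G v ≠ 0 := fun h => hv ((dc_eq_zero_iff G hconn hcne).mp h)
      refine ⟨⟨(v, w), hadj⟩, ?_, rfl⟩
      simp only [hDd, Finset.mem_filter, Finset.mem_univ, true_and]
      show dc G w < dc G v
      omega
  have h6 : {v : V | ¬ InTwoCore G v}.ncard
      = (Finset.univ.filter (fun v : V => ¬ InTwoCore G v)).card := by
    rw [← Nat.card_coe_set_eq, Nat.card_eq_fintype_card, ← Fintype.card_subtype]
    rfl
  rw [h1, Finset.card_union_of_disjoint h2, h4, h5, h6]
  omega

include hconn hcne in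
lemma nb_rootMultiplicity :
    (nbMatrix G).charpoly.rootMultiplicity 0 = 2 * {v : V | ¬ InTwoCore G v}.ncard := by
  classical
  rw [nb_charpoly_eq G hconn hcne]
  have hp0 : ((nbMatrix G).toSquareBlock (bfn G) 0).charpoly ≠ 0 :=
    (Matrix.charpoly_monic _).ne_zero
  rw [show (X : ℂ[X]) ^ (Finset.univ.filter (fun e : G.Dart => bfn G e ≠ 0)).card
      = (X - C (0:ℂ)) ^ (Finset.univ.filter (fun e : G.Dart => bfn G e ≠ 0)).card by
    rw [map_zero, sub_zero]]
  rw [Polynomial.rootMultiplicity_mul_X_sub_C_pow hp0]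
  have hroot : ((nbMatrix G).toSquareBlock (bfn G) 0).charpoly.rootMultiplicity 0 = 0 := by
    refine Polynomial.rootMultiplicity_eq_zero ?_
    intro hIs
    apply core_block_det_ne_zero G hconn hcne
    rw [Matrix.det_eq_sign_charpoly_coeff, Polynomial.coeff_zero_eq_eval_zero]
    rw [Polynomial.IsRoot] at hIs
    rw [hIs, mul_zero]
  rw [hroot, zero_add, count_noncore_darts G hconn hcne]
end


/-- For a connected graph with `m ≥ n`: the kernel of `B` has dimension `n₁`
(the number of vertices of degree 1), and the multiplicity of `0` as a root of the
characteristic polynomial of `B` is `2·s₁`, where `s₁` is the number of vertices outside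
the 2-core. -/
theorem nbMatrix_kernel_dim_and_zero_multiplicity
    [DecidableEq V] [Fintype V] (G : SimpleGraph V) [DecidableRel G.Adj]
    (hconn : G.Connected) (hm : Fintype.card V ≤ G.edgeFinset.card) :
    Module.finrank ℂ ↥(LinearMap.ker (nbMatrix G).mulVecLin)
      = {v : V | G.degree v = 1}.ncard ∧
    (nbMatrix G).charpoly.rootMultiplicity 0 = 2 * {v : V | ¬ InTwoCore G v}.ncard := by
  have hcne : ∃ c, InTwoCore G c := core_nonempty G hconn hm
  exact ⟨finrank_ker_nb G, nb_rootMultiplicity G hconn hcne⟩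
end

section
/- B is invertible if and only if every vertex of G has degree at least 2. Moreover, when every vertex has degree at least 2, the matrix M indexed by darts with entries M[(k→l),(i→j)] = (δ_{il}/(d_l − 1))·(1 − δ_{kj}·(d_l − 1)) satisfies M·B = I and B·M = I, i.e. M = B⁻¹. -/
open Matrix Polynomial BigOperators

variable {V : Type*}

/-- The claimed inverse of the non-backtracking matrix:
`M[(k→l),(i→j)] = (δ_{il}/(d_l − 1))·(1 − δ_{kj}·(d_l − 1))`. -/
noncomputable def nbInvMatrix [DecidableEq V] [Fintype V] (G : SimpleGraph V)
    [DecidableRel G.Adj] : Matrix G.Dart G.Dart ℂ :=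
  fun e f => ((if f.fst = e.snd then (1 : ℂ) else 0) / ((G.degree e.snd : ℂ) - 1)) *
    (1 - (if e.fst = f.snd then (1 : ℂ) else 0) * ((G.degree e.snd : ℂ) - 1))

lemma sum_darts_fst [DecidableEq V] [Fintype V] (G : SimpleGraph V) [DecidableRel G.Adj]
    (v : V) (h : V → ℂ) :
    ∑ f : G.Dart, (if f.fst = v then h f.snd else 0)
      = ∑ w ∈ G.neighborFinset v, h w := by
  rw [← Finset.sum_filter]
  refine Finset.sum_bij (fun f _ => f.snd) ?_ ?_ ?_ ?_
  · intro f hf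
    simp only [Finset.mem_filter, Finset.mem_univ, true_and] at hf
    simpa [SimpleGraph.mem_neighborFinset, ← hf] using f.adj
  · intro f hf g hg hfg
    simp only [Finset.mem_filter, Finset.mem_univ, true_and] at hf hg
    exact SimpleGraph.Dart.ext _ _ (Prod.ext (hf.trans hg.symm) hfg)
  · intro w hw
    rw [SimpleGraph.mem_neighborFinset] at hw
    exact ⟨⟨(v, w), hw⟩, by simp, rfl⟩
  · intro f hf; rfl

lemma nbInv_mul_nb [DecidableEq V] [Fintype V] (G : SimpleGraph V) [DecidableRel G.Adj]
    (hdeg : ∀ v : V, 2 ≤ G.degree v) :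
    nbInvMatrix G * nbMatrix G = 1 := by
  ext e g
  set d : ℂ := (G.degree e.snd : ℂ) with hdset
  have hd : d - 1 ≠ 0 := by
    have h2 := hdeg e.snd
    intro h
    have h1 : (G.degree e.snd : ℂ) = 1 := by rw [hdset] at h; linear_combination h
    have : G.degree e.snd = 1 := by exact_mod_cast h1
    omega
  rw [Matrix.mul_apply]
  have hterm : ∀ f : G.Dart, nbInvMatrix G e f * nbMatrix G f g
      = if f.fst = e.snd then
          (((1 : ℂ) / (d - 1)) * (1 - (if e.fst = f.snd then (1 : ℂ) else 0) * (d - 1)) *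
            (if g.snd = e.snd ∧ g.fst ≠ f.snd then 1 else 0))
        else 0 := by
    intro f
    unfold nbInvMatrix nbMatrix
    by_cases h : f.fst = e.snd <;> simp [h, hdset]
  have hkey := sum_darts_fst G e.snd (fun w =>
    ((1 : ℂ) / (d - 1)) * (1 - (if e.fst = w then (1 : ℂ) else 0) * (d - 1)) *
      (if g.snd = e.snd ∧ g.fst ≠ w then 1 else 0))
  rw [Finset.sum_congr rfl (fun f _ => hterm f), hkey]
  have hsum : ∀ w ∈ G.neighborFinset e.snd,
      ((1 : ℂ) / (d - 1)) * (1 - (if e.fst = w then (1 : ℂ) else 0) * (d - 1)) *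
        (if g.snd = e.snd ∧ g.fst ≠ w then 1 else 0)
      = ((1 : ℂ) / (d - 1)) * (if g.snd = e.snd ∧ g.fst ≠ w then 1 else 0)
        - (if e.fst = w then (1 : ℂ) else 0) *
            (if g.snd = e.snd ∧ g.fst ≠ w then 1 else 0) := by
    intro w _
    by_cases h2 : g.snd = e.snd ∧ g.fst ≠ w
    · rw [if_pos h2]
      by_cases h1 : e.fst = w <;> simp only [h1, if_true, if_false] <;> field_simp
    · rw [if_neg h2]
      ring
  rw [Finset.sum_congr rfl hsum, Finset.sum_sub_distrib]
  have h1 : ∑ w ∈ G.neighborFinset e.snd,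
      ((1 : ℂ) / (d - 1)) * (if g.snd = e.snd ∧ g.fst ≠ w then 1 else 0)
      = if g.snd = e.snd then 1 else 0 := by
    rw [← Finset.mul_sum]
    by_cases hg : g.snd = e.snd
    · have hmem : g.fst ∈ G.neighborFinset e.snd := by
        rw [SimpleGraph.mem_neighborFinset, ← hg]
        exact g.adj.symm
      have : ∑ w ∈ G.neighborFinset e.snd,
          (if g.snd = e.snd ∧ g.fst ≠ w then (1 : ℂ) else 0)
          = ∑ w ∈ G.neighborFinset e.snd, ((1 : ℂ) - if w = g.fst then 1 else 0) := by
        refine Finset.sum_congr rfl fun w _ => ?_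
        by_cases hw : w = g.fst <;> simp [hw, hg, Ne, eq_comm]
      rw [this, Finset.sum_sub_distrib, Finset.sum_const, Finset.sum_ite_eq' _ _ _, if_pos hmem,
        SimpleGraph.card_neighborFinset_eq_degree, nsmul_eq_mul, mul_one, if_pos hg]
      rw [← hdset]
      field_simp
    · simp [hg]
  have h2 : ∑ w ∈ G.neighborFinset e.snd,
      (if e.fst = w then (1 : ℂ) else 0) *
        (if g.snd = e.snd ∧ g.fst ≠ w then 1 else 0)
      = if g.snd = e.snd ∧ g.fst ≠ e.fst then 1 else 0 := by
    have hmem : e.fst ∈ G.neighborFinset e.snd := by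
      rw [SimpleGraph.mem_neighborFinset]
      exact e.adj.symm
    have : ∀ w ∈ G.neighborFinset e.snd,
        (if e.fst = w then (1 : ℂ) else 0) *
          (if g.snd = e.snd ∧ g.fst ≠ w then 1 else 0)
        = if w = e.fst then (if g.snd = e.snd ∧ g.fst ≠ e.fst then (1 : ℂ) else 0) else 0 := by
      intro w _
      by_cases hw : w = e.fst <;> simp [hw, eq_comm]
    rw [Finset.sum_congr rfl this, Finset.sum_ite_eq' _ _ _, if_pos hmem]
  rw [h1, h2, Matrix.one_apply]
  by_cases hg : g.snd = e.snd
  · by_cases hg1 : g.fst = e.fst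
    · have : e = g := SimpleGraph.Dart.ext _ _ (Prod.ext hg1.symm hg.symm)
      simp [this, hg, hg1]
    · have : ¬ e = g := fun h => hg1 (by rw [h])
      simp [hg, hg1, this, Ne, eq_comm]
  · have : ¬ e = g := fun h => hg (by rw [h])
    simp [hg, this]

/-- `B` is invertible iff every vertex of `G` has degree at least `2`;
moreover in that case the explicit matrix `M` above is a two-sided inverse of `B`,
i.e. `M = B⁻¹`. -/
theorem nbMatrix_isUnit_iff_minDegree_two
    [DecidableEq V] [Fintype V] (G : SimpleGraph V) [DecidableRel G.Adj]
    (hconn : G.Connected) (hn : 2 ≤ Fintype.card V) :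
    (IsUnit (nbMatrix G) ↔ ∀ v : V, 2 ≤ G.degree v) ∧
    ((∀ v : V, 2 ≤ G.degree v) →
      nbInvMatrix G * nbMatrix G = 1 ∧ nbMatrix G * nbInvMatrix G = 1 ∧
      nbInvMatrix G = (nbMatrix G)⁻¹) := by
  have hmain : (∀ v : V, 2 ≤ G.degree v) →
      nbInvMatrix G * nbMatrix G = 1 ∧ nbMatrix G * nbInvMatrix G = 1 ∧
      nbInvMatrix G = (nbMatrix G)⁻¹ := by
    intro h
    have hMB := nbInv_mul_nb G h
    have hBM := mul_eq_one_comm.mp hMB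
    exact ⟨hMB, hBM, (Matrix.inv_eq_left_inv hMB).symm⟩
  refine ⟨⟨?_, fun h =>
    @isUnit_of_invertible _ _ _ (invertibleOfLeftInverse _ _ (nbInv_mul_nb G h))⟩, hmain⟩
  intro hB v
  by_contra hlt
  push_neg at hlt
  -- every vertex has a neighbor
  obtain ⟨u0, hu0⟩ := Fintype.exists_ne_of_one_lt_card hn v
  have hadj : ∃ w, G.Adj v w := by
    obtain ⟨p⟩ := hconn v u0
    cases p with
    | nil => exact absurd rfl hu0.symm
    | cons h _ => exact ⟨_, h⟩
  have hpos : 0 < G.degree v := G.degree_pos_iff_exists_adj v |>.mpr hadj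
  have hone : G.degree v = 1 := by omega
  rw [← SimpleGraph.card_neighborFinset_eq_degree] at hone
  obtain ⟨u, hu⟩ := Finset.card_eq_one.mp hone
  have hvu : G.Adj v u := by
    rw [← SimpleGraph.mem_neighborFinset, hu]
    exact Finset.mem_singleton_self u
  set e0 : G.Dart := ⟨(v, u), hvu⟩ with he0
  have hrow : ∀ f : G.Dart, nbMatrix G e0 f = 0 := by
    intro f
    unfold nbMatrix
    rw [if_neg]
    rintro ⟨h1, h2⟩
    apply h2
    have : f.fst ∈ G.neighborFinset v := by
      rw [SimpleGraph.mem_neighborFinset]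
      have := f.adj
      rw [h1] at this
      exact this.symm
    rw [hu, Finset.mem_singleton] at this
    exact this
  have hdet : (nbMatrix G).det = 0 := Matrix.det_eq_zero_of_row_eq_zero e0 hrow
  have := (Matrix.isUnit_iff_isUnit_det _).mp hB
  rw [hdet] at this
  exact (not_isUnit_zero : ¬ IsUnit (0 : ℂ)) this
end

section
/- Suppose B·v = λ·v for a complex vector v indexed by the darts of G and λ ∈ ℂ. Then for every vertex k of G, (d_k − 1)·(v into k) = λ·(v from k). -/
open Matrix Polynomial BigOperators

variable {V : Type*}

/-- `(v into k) = ∑_{i adjacent to k} v_{i→k}`: the sum of `v` over all darts with target `k`. -/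
noncomputable def vInto [DecidableEq V] [Fintype V] (G : SimpleGraph V) [DecidableRel G.Adj]
    (v : G.Dart → ℂ) (k : V) : ℂ :=
  ∑ f : G.Dart, if f.snd = k then v f else 0

/-- `(v from k) = ∑_{i adjacent to k} v_{k→i}`: the sum of `v` over all darts with source `k`. -/
noncomputable def vFrom [DecidableEq V] [Fintype V] (G : SimpleGraph V) [DecidableRel G.Adj]
    (v : G.Dart → ℂ) (k : V) : ℂ :=
  ∑ f : G.Dart, if f.fst = k then v f else 0

lemma count_aux [DecidableEq V] [Fintype V] (G : SimpleGraph V) [DecidableRel G.Adj]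
    (k w : V) (hadj : G.Adj w k) :
    (Finset.univ.filter (fun e : G.Dart => e.fst = k ∧ w ≠ e.snd)).card
      = G.degree k - 1 := by
  classical
  set d0 : G.Dart := ⟨(k, w), hadj.symm⟩ with hd0
  have hmem : d0 ∈ Finset.univ.filter (fun e : G.Dart => e.fst = k) := by
    simp [hd0]
  have hset : Finset.univ.filter (fun e : G.Dart => e.fst = k ∧ w ≠ e.snd)
      = (Finset.univ.filter (fun e : G.Dart => e.fst = k)).erase d0 := by
    ext e
    simp only [Finset.mem_filter, Finset.mem_erase, Finset.mem_univ, true_and]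
    constructor
    · rintro ⟨h1, h2⟩
      refine ⟨?_, h1⟩
      intro h; subst h; exact h2 rfl
    · rintro ⟨h1, h2⟩
      refine ⟨h2, ?_⟩
      intro h
      apply h1
      exact SimpleGraph.Dart.ext _ _ (Prod.ext h2 h.symm)
  rw [hset, Finset.card_erase_of_mem hmem, SimpleGraph.dart_fst_fiber_card_eq_degree]

/-- If `B·v = λ·v` then for every vertex `k`,
`(d_k − 1)·(v into k) = λ·(v from k)`. -/
theorem nbMatrix_eigenvector_into_from
    [DecidableEq V] [Fintype V] (G : SimpleGraph V) [DecidableRel G.Adj]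
    (hconn : G.Connected) (v : G.Dart → ℂ) (μ : ℂ)
    (heig : (nbMatrix G).mulVec v = μ • v) (k : V) :
    ((G.degree k : ℂ) - 1) * vInto G v k = μ * vFrom G v k := by
  classical
  have key : ∀ e : G.Dart, (nbMatrix G).mulVec v e = μ * v e := fun e => congrFun heig e
  have hR : ∑ e : G.Dart, (if e.fst = k then (nbMatrix G).mulVec v e else 0)
      = μ * vFrom G v k := by
    rw [vFrom, Finset.mul_sum]
    refine Finset.sum_congr rfl fun e _ => ?_
    rw [key e]
    split <;> simp
  have hL : ∑ e : G.Dart, (if e.fst = k then (nbMatrix G).mulVec v e else 0)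
      = ((G.degree k : ℂ) - 1) * vInto G v k := by
    have : ∀ e : G.Dart, (if e.fst = k then (nbMatrix G).mulVec v e else 0)
        = ∑ f : G.Dart, (if f.snd = k ∧ e.fst = k ∧ f.fst ≠ e.snd then v f else 0) := by
      intro e
      rw [Matrix.mulVec, dotProduct]
      simp only [nbMatrix, ite_mul, one_mul, zero_mul]
      split
      · rename_i h
        refine Finset.sum_congr rfl fun f _ => ?_
        congr 1
        simp [h]
      · rename_i h
        symm
        refine Finset.sum_eq_zero fun f _ => ?_
        rw [if_neg]
        rintro ⟨_, h2, _⟩; exact h h2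
    simp only [this]
    rw [Finset.sum_comm]
    rw [vInto, Finset.mul_sum]
    refine Finset.sum_congr rfl fun f _ => ?_
    by_cases hf : f.snd = k
    · simp only [hf, true_and, if_true]
      have hadj : G.Adj f.fst k := hf ▸ f.adj
      rw [← Finset.sum_filter, Finset.sum_const, count_aux G k f.fst hadj, nsmul_eq_mul,
        Nat.cast_sub (Nat.one_le_iff_ne_zero.mpr (Nat.pos_iff_ne_zero.mp
          ((G.degree_pos_iff_exists_adj k).mpr ⟨f.fst, hadj.symm⟩))), Nat.cast_one]
    · simp [hf]
  rw [← hL, hR]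
end

section
/- Suppose every vertex of G has degree at least 2 and B·v = λ·v with λ ≠ 0 and v ≠ 0. Then there exist r ≥ 3 and distinct vertices i₀, i₁, …, i_{r−1} of G with i_s adjacent to i_{s+1 mod r} for every s, such that v_{i_s → i_{s+1 mod r}} ≠ 0 for every s = 0, …, r−1. -/
open Matrix Polynomial BigOperators

variable {V : Type*}

/-- If every vertex has degree at least `2` and `B·v = λ·v` with `λ ≠ 0`,
`v ≠ 0`, then there is a cycle `i₀, i₁, …, i_{r−1}` (`r ≥ 3`, distinct vertices, consecutive
ones adjacent) on each of whose darts `i_s → i_{s+1}` the vector `v` is nonzero. -/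
theorem nbMatrix_eigenvector_nonzero_on_cycle
    [DecidableEq V] [Fintype V] (G : SimpleGraph V) [DecidableRel G.Adj]
    (hconn : G.Connected) (hdeg : ∀ u : V, 2 ≤ G.degree u)
    (v : G.Dart → ℂ) (μ : ℂ) (hμ : μ ≠ 0) (hv : v ≠ 0)
    (heig : (nbMatrix G).mulVec v = μ • v) :
    ∃ r : ℕ, 3 ≤ r ∧ ∃ f : ZMod r → V, Function.Injective f ∧
      ∃ hadj : ∀ s : ZMod r, G.Adj (f s) (f (s + 1)),
        ∀ s : ZMod r, v ⟨(f s, f (s + 1)), hadj s⟩ ≠ 0 := by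
  classical
  -- Step 1: every dart with `v ≠ 0` has a non-backtracking predecessor with `v ≠ 0`.
  have key : ∀ e : G.Dart, v e ≠ 0 →
      ∃ f : G.Dart, f.snd = e.fst ∧ f.fst ≠ e.snd ∧ v f ≠ 0 := by
    intro e he
    by_contra hno
    push_neg at hno
    have h1 : (nbMatrix G).mulVec v e = 0 := by
      unfold Matrix.mulVec dotProduct nbMatrix
      apply Finset.sum_eq_zero
      intro f _
      by_cases hf : f.snd = e.fst ∧ f.fst ≠ e.snd
      · simp [hf, hno f hf.1 hf.2]
      · simp [hf]
    have h2 : μ * v e = 0 := by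
      have := congrFun heig e
      rw [h1] at this
      simpa using this.symm
    exact (mul_ne_zero hμ he) h2
  -- Step 2: a starting dart with `v ≠ 0`.
  obtain ⟨e0, h0⟩ : ∃ e, v e ≠ 0 := Function.ne_iff.mp hv
  -- Step 3: iterate predecessors.
  set step : {e : G.Dart // v e ≠ 0} → {e : G.Dart // v e ≠ 0} :=
    fun p => ⟨(key p.1 p.2).choose, (key p.1 p.2).choose_spec.2.2⟩ with hstep
  set g : ℕ → {e : G.Dart // v e ≠ 0} := fun n => step^[n] ⟨e0, h0⟩ with hgdef
  have hg1 : ∀ n, g (n+1) = step (g n) := by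
    intro n
    simp only [hgdef]
    exact Function.iterate_succ_apply' step n _
  have hg : ∀ n, ((g (n+1)).1).snd = ((g n).1).fst ∧ ((g (n+1)).1).fst ≠ ((g n).1).snd := by
    intro n
    rw [hg1 n]
    exact ⟨(key (g n).1 (g n).2).choose_spec.1, (key (g n).1 (g n).2).choose_spec.2.1⟩
  -- Step 4: pigeonhole.
  obtain ⟨a, b, hab, hgab⟩ : ∃ a b : ℕ, a ≠ b ∧ g a = g b :=
    Finite.exists_ne_map_eq_of_infinite g
  wlog hlt : a < b generalizing a b
  · exact this b a hab.symm hgab.symm (by omega)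
  -- Step 5: forward walk.
  set d : ℕ → G.Dart := fun k => (g (b - k)).1 with hddef
  set y : ℕ → V := fun k => (d k).fst with hydef
  have hdnz : ∀ k, v (d k) ≠ 0 := fun k => (g (b - k)).2
  have hfwd : ∀ k, k < b → (d k).snd = (d (k+1)).fst ∧ (d k).fst ≠ (d (k+1)).snd := by
    intro k hk
    have hbk : b - k = (b - (k+1)) + 1 := by omega
    have := hg (b - (k+1))
    rw [← hbk] at this
    exact ⟨this.1, this.2⟩
  set L : ℕ := b - a with hLdef
  have hL1 : 1 ≤ L := by omega
  have hLb : L ≤ b := by omega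
  have hy0L : y 0 = y L := by
    simp only [hydef, hddef]
    have : b - L = a := by omega
    rw [this, Nat.sub_zero, hgab]
  -- adjacent vertices along the walk
  have hstep' : ∀ k, k < b → (d k).fst = y k ∧ (d k).snd = y (k+1) := by
    intro k hk
    exact ⟨rfl, (hfwd k hk).1⟩
  -- Step 6: minimal closed segment.
  set P : ℕ → Prop := fun t => 1 ≤ t ∧ ∃ p, p + t ≤ L ∧ y p = y (p + t) with hPdef
  have hPL : P L := ⟨hL1, 0, by omega, by simpa using hy0L⟩
  have hPex : ∃ t, P t := ⟨L, hPL⟩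
  set t0 : ℕ := Nat.find hPex with ht0def
  have ht0spec : P t0 := Nat.find_spec hPex
  have ht0min : ∀ t, t < t0 → ¬ P t := fun t ht => Nat.find_min hPex ht
  have ht0L : t0 ≤ L := Nat.find_min' hPex hPL
  obtain ⟨ht01, p, hpL, hyp⟩ := ht0spec
  -- t0 ≥ 3
  have ht0ne1 : t0 ≠ 1 := by
    intro h1
    rw [h1] at hyp hpL
    have hd := hstep' p (by omega)
    have hadj := (d p).adj
    rw [hd.1, hd.2, ← hyp] at hadj
    exact G.irrefl hadj
  have ht0ne2 : t0 ≠ 2 := by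
    intro h2
    rw [h2] at hyp hpL
    have hnb := (hfwd p (by omega)).2
    have hd1 := hstep' (p+1) (by omega)
    rw [hd1.2] at hnb
    exact hnb (by rw [show p + 1 + 1 = p + 2 from rfl, ← hyp])
  have ht03 : 3 ≤ t0 := by omega
  have ht0pos : 0 < t0 := by omega
  haveI : NeZero t0 := ⟨by omega⟩
  haveI : Fact (1 < t0) := ⟨by omega⟩
  -- distinctness within the segment
  have hdist : ∀ u u' : ℕ, u < u' → u' < t0 → y (p + u) ≠ y (p + u') := by
    intro u u' huu hut heq
    apply ht0min (u' - u) (by omega)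
    refine ⟨by omega, p + u, by omega, ?_⟩
    rw [show p + u + (u' - u) = p + u' from by omega]
    exact heq
  refine ⟨t0, ht03, fun s => y (p + s.val), ?_, ?_⟩
  · intro s s' h
    by_contra hne
    have hv1 : s.val ≠ s'.val := fun hh => hne (ZMod.val_injective t0 hh)
    rcases lt_or_gt_of_ne hv1 with hlt' | hlt'
    · exact hdist s.val s'.val hlt' (ZMod.val_lt s') h
    · exact hdist s'.val s.val hlt' (ZMod.val_lt s) h.symm
  · have hval : ∀ s : ZMod t0, (s + 1).val = (s.val + 1) % t0 := by
      intro s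
      rw [ZMod.val_add, ZMod.val_one]
    have hnext : ∀ s : ZMod t0, y (p + (s + 1).val) = y (p + s.val + 1) := by
      intro s
      rcases Nat.lt_or_ge (s.val + 1) t0 with h | h
      · rw [hval s, Nat.mod_eq_of_lt h]
        ring_nf
      · have hs : s.val + 1 = t0 := by have := ZMod.val_lt s; omega
        rw [hval s, hs, Nat.mod_self, Nat.add_zero, hyp,
          show p + t0 = p + s.val + 1 from by omega]
    have hdartfst : ∀ s : ZMod t0, (d (p + s.val)).fst = y (p + s.val) := fun s => rfl
    have hdartsnd : ∀ s : ZMod t0, (d (p + s.val)).snd = y (p + (s + 1).val) := by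
      intro s
      rw [hnext s]
      have hsv : s.val < t0 := ZMod.val_lt s
      exact (hstep' (p + s.val) (by omega)).2
    have hadj : ∀ s : ZMod t0, G.Adj (y (p + s.val)) (y (p + (s + 1).val)) := by
      intro s
      have := (d (p + s.val)).adj
      rwa [hdartfst s, hdartsnd s] at this
    refine ⟨hadj, ?_⟩
    intro s
    have hed : (⟨(y (p + s.val), y (p + (s + 1).val)), hadj s⟩ : G.Dart) = d (p + s.val) := by
      apply SimpleGraph.Dart.ext
      exact Prod.ext (hdartfst s).symm (hdartsnd s).symm
    rw [hed]
    exact hdnz (p + s.val)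
end

section
/- Suppose every vertex of G has degree at least 2, and suppose B·v = λ·v with λ ≠ 0 and v ≠ 0. Then v is non-leaky if and only if λ is a root of unity, i.e. there exists an integer r ≥ 1 with λ^r = 1. -/
open Matrix Polynomial BigOperators

variable {V : Type*}

/-- A vector `v` indexed by darts is non-leaky if `(d_k − 2)·(v into k) = 0` for every
vertex `k`. -/
def NonLeaky [DecidableEq V] [Fintype V] (G : SimpleGraph V) [DecidableRel G.Adj]
    (v : G.Dart → ℂ) : Prop :=
  ∀ k : V, ((G.degree k : ℂ) - 2) * vInto G v k = 0

namespace NBAux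

variable [DecidableEq V] [Fintype V] (G : SimpleGraph V) [DecidableRel G.Adj]

lemma sum_symm (g : G.Dart → ℂ) : ∑ e : G.Dart, g e.symm = ∑ e : G.Dart, g e :=
  Equiv.sum_comp (Function.Involutive.toPerm _ SimpleGraph.Dart.symm_involutive) g

lemma symm_fst (e : G.Dart) : e.symm.fst = e.snd := rfl
lemma symm_snd (e : G.Dart) : e.symm.snd = e.fst := rfl

lemma fiber_snd (w : G.Dart → ℂ) (g : V → ℂ) :
    ∑ e : G.Dart, g e.snd * w e = ∑ k, g k * vInto G w k := by
  have h : ∀ k, g k * vInto G w k = ∑ e : G.Dart, if e.snd = k then g e.snd * w e else 0 := by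
    intro k
    rw [vInto, Finset.mul_sum]
    refine Finset.sum_congr rfl fun e _ => ?_
    by_cases h : e.snd = k
    · subst h; simp
    · simp [h]
  rw [Finset.sum_congr rfl fun k _ => h k, Finset.sum_comm]
  refine Finset.sum_congr rfl fun e _ => ?_
  simp

lemma fiber_fst (w : G.Dart → ℂ) (g : V → ℂ) :
    ∑ e : G.Dart, g e.fst * w e = ∑ k, g k * vFrom G w k := by
  have h : ∀ k, g k * vFrom G w k = ∑ e : G.Dart, if e.fst = k then g e.fst * w e else 0 := by
    intro k
    rw [vFrom, Finset.mul_sum]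
    refine Finset.sum_congr rfl fun e _ => ?_
    by_cases h : e.fst = k
    · subst h; simp
    · simp [h]
  rw [Finset.sum_congr rfl fun k _ => h k, Finset.sum_comm]
  refine Finset.sum_congr rfl fun e _ => ?_
  simp

lemma vFrom_const (k : V) : vFrom G (fun _ => (1:ℂ)) k = (G.degree k : ℂ) := by
  rw [vFrom, ← Finset.sum_filter]
  rw [Finset.sum_const]
  have : (Finset.filter (fun e : G.Dart => e.fst = k) Finset.univ).card = G.degree k := by
    simpa using G.dart_fst_fiber_card_eq_degree k
  rw [this]
  simp

lemma vInto_conj (w : G.Dart → ℂ) (k : V) :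
    vInto G (fun e => (starRingEnd ℂ) (w e)) k = (starRingEnd ℂ) (vInto G w k) := by
  rw [vInto, vInto, map_sum]
  refine Finset.sum_congr rfl fun e _ => ?_
  by_cases h : e.snd = k <;> simp [h]

lemma vFrom_conj (w : G.Dart → ℂ) (k : V) :
    vFrom G (fun e => (starRingEnd ℂ) (w e)) k = (starRingEnd ℂ) (vFrom G w k) := by
  rw [vFrom, vFrom, map_sum]
  refine Finset.sum_congr rfl fun e _ => ?_
  by_cases h : e.fst = k <;> simp [h]

lemma vInto_symm (w : G.Dart → ℂ) (k : V) :
    vInto G (fun e => w e.symm) k = vFrom G w k := by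
  rw [vInto, vFrom, ← sum_symm G (fun e => if e.fst = k then w e else 0)]
  refine Finset.sum_congr rfl fun e _ => ?_
  rfl

lemma vFrom_symm (w : G.Dart → ℂ) (k : V) :
    vFrom G (fun e => w e.symm) k = vInto G w k := by
  rw [vInto, vFrom, ← sum_symm G (fun e => if e.snd = k then w e else 0)]
  refine Finset.sum_congr rfl fun e _ => ?_
  rfl

variable (v : G.Dart → ℂ) (μ : ℂ)

lemma pair_eq (heig : (nbMatrix G).mulVec v = μ • v) (e : G.Dart) :
    μ * v e + v e.symm = vInto G v e.fst := by
  have h := congrFun heig e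
  simp only [Matrix.mulVec, dotProduct, nbMatrix, Pi.smul_apply, smul_eq_mul] at h
  have split : ∀ f : G.Dart, (if f.snd = e.fst then v f else 0)
      = (if f.snd = e.fst ∧ f.fst ≠ e.snd then 1 else 0) * v f
        + (if f = e.symm then v f else 0) := by
    intro f
    by_cases h1 : f.snd = e.fst
    · by_cases h2 : f.fst = e.snd
      · have hf : f = e.symm := by
          apply SimpleGraph.Dart.ext
          exact Prod.ext h2 h1
        simp [h1, h2, hf]
      · have hf : f ≠ e.symm := by
          intro hf; exact h2 (by rw [hf]; rfl)
        simp [h1, h2, hf]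
    · have hf : f ≠ e.symm := by
        intro hf; exact h1 (by rw [hf]; rfl)
      simp [h1, hf]
  have : vInto G v e.fst
      = (∑ f : G.Dart, (if f.snd = e.fst ∧ f.fst ≠ e.snd then 1 else 0) * v f)
        + ∑ f : G.Dart, (if f = e.symm then v f else 0) := by
    rw [vInto, ← Finset.sum_add_distrib]
    exact Finset.sum_congr rfl fun f _ => split f
  rw [this, h, Finset.sum_ite_eq' Finset.univ e.symm v]
  simp

lemma sum_ite_count (k : V) (c : ℂ) :
    ∑ e : G.Dart, (if e.fst = k then c else 0) = (G.degree k : ℂ) * c := by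
  rw [← Finset.sum_filter, Finset.sum_const]
  have h : (Finset.filter (fun e : G.Dart => e.fst = k) Finset.univ).card = G.degree k := by
    simpa using G.dart_fst_fiber_card_eq_degree k
  rw [h, nsmul_eq_mul]

lemma from_eq (heig : (nbMatrix G).mulVec v = μ • v) (k : V) :
    μ * vFrom G v k = ((G.degree k : ℂ) - 1) * vInto G v k := by
  have key : ∑ e : G.Dart, (if e.fst = k then (μ * v e + v e.symm) else 0)
      = ∑ e : G.Dart, (if e.fst = k then vInto G v e.fst else 0) := by
    refine Finset.sum_congr rfl fun e _ => ?_
    rw [pair_eq G v μ heig e]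
  have l1 : ∑ e : G.Dart, (if e.fst = k then (μ * v e + v e.symm) else 0)
      = μ * vFrom G v k + vInto G v k := by
    have s1 : ∀ e : G.Dart, (if e.fst = k then (μ * v e + v e.symm) else 0)
        = μ * (if e.fst = k then v e else 0) + (if e.fst = k then v e.symm else 0) := by
      intro e; by_cases h : e.fst = k <;> simp [h]
    rw [Finset.sum_congr rfl fun e _ => s1 e, Finset.sum_add_distrib, ← Finset.mul_sum]
    congr 1
    · exact Fintype.sum_equiv (Function.Involutive.toPerm _ SimpleGraph.Dart.symm_involutive)
        _ _ (fun e => rfl)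
  have l2 : ∑ e : G.Dart, (if e.fst = k then vInto G v e.fst else 0)
      = (G.degree k : ℂ) * vInto G v k := by
    rw [← sum_ite_count G k (vInto G v k)]
    refine Finset.sum_congr rfl fun e _ => ?_
    by_cases h : e.fst = k
    · rw [if_pos h, if_pos h, h]
    · simp [h]
  rw [l1, l2] at key
  linear_combination key

lemma into_fst_eq (heig : (nbMatrix G).mulVec v = μ • v) (k : V) :
    vInto G (fun e => vInto G v e.fst) k = μ * vInto G v k + vFrom G v k := by
  have l1 : vInto G (fun e => vInto G v e.fst) k
      = ∑ e : G.Dart, (if e.snd = k then (μ * v e + v e.symm) else 0) := by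
    rw [vInto]
    refine Finset.sum_congr rfl fun e _ => ?_
    rw [pair_eq G v μ heig e]
  have s1 : ∀ e : G.Dart, (if e.snd = k then (μ * v e + v e.symm) else 0)
      = μ * (if e.snd = k then v e else 0) + (if e.snd = k then v e.symm else 0) := by
    intro e; by_cases h : e.snd = k <;> simp [h]
  rw [l1, Finset.sum_congr rfl fun e _ => s1 e, Finset.sum_add_distrib, ← Finset.mul_sum]
  congr 1
  · exact Fintype.sum_equiv (Function.Involutive.toPerm _ SimpleGraph.Dart.symm_involutive)
      _ _ (fun e => rfl)

lemma sum_reindex (g h : G.Dart → ℂ) (hgh : ∀ e : G.Dart, g e = h e.symm) :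
    ∑ e : G.Dart, g e = ∑ e : G.Dart, h e := by
  rw [Finset.sum_congr rfl fun e _ => hgh e]
  exact sum_symm G h

lemma normSq_eq_one (heig : (nbMatrix G).mulVec v = μ • v) (hnl : NonLeaky G v)
    (hv : v ≠ 0) : Complex.normSq μ = 1 := by
  classical
  set c : G.Dart → ℂ := fun e => (starRingEnd ℂ) (v e) with hc
  have hμF : ∀ k, μ * vFrom G v k = vInto G v k := by
    intro k
    have h1 := from_eq G v μ heig k
    have h2 := hnl k
    linear_combination h1 + h2
  set Sc : ℂ := ∑ e : G.Dart, c e * v e with hS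
  set P : ℂ := ∑ e : G.Dart, c e * v e.symm with hP
  set T : ℂ := ∑ k, vInto G v k * (starRingEnd ℂ) (vInto G v k) with hT
  have reindex1 : ∑ e : G.Dart, c e.symm * v e = P := by
    rw [hP]
    exact sum_reindex G _ _ (fun e => by rw [SimpleGraph.Dart.symm_symm])
  have reindex2 : ∑ e : G.Dart, c e.symm * v e.symm = Sc := by
    rw [hS, ← sum_symm G (fun e => c e * v e)]
  have hPreal : (starRingEnd ℂ) P = P := by
    have h1 : (starRingEnd ℂ) P = ∑ e : G.Dart, c e.symm * v e := by
      rw [hP, map_sum]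
      refine Finset.sum_congr rfl fun e _ => ?_
      simp only [hc, _root_.map_mul, Complex.conj_conj]
      ring
    rw [h1, reindex1]
  have EA : μ * P + Sc = T := by
    have lhs : ∑ e : G.Dart, c e.symm * (μ * v e + v e.symm) = μ * P + Sc := by
      have expand : ∀ e : G.Dart, c e.symm * (μ * v e + v e.symm)
          = μ * (c e.symm * v e) + c e.symm * v e.symm := fun e => by ring
      rw [Finset.sum_congr rfl fun e _ => expand e, Finset.sum_add_distrib,
        ← Finset.mul_sum, reindex1, reindex2]
    have rhs : ∑ e : G.Dart, c e.symm * (μ * v e + v e.symm) = T := by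
      have step1 : ∀ e : G.Dart, c e.symm * (μ * v e + v e.symm)
          = c e.symm * vInto G v e.fst := fun e => by rw [pair_eq G v μ heig e]
      rw [Finset.sum_congr rfl fun e _ => step1 e]
      have step2 : ∑ e : G.Dart, c e.symm * vInto G v e.fst
          = ∑ e : G.Dart, vInto G v e.snd * c e :=
        sum_reindex G _ _ (fun e => mul_comm _ _)
      rw [step2, fiber_snd G c (fun k => vInto G v k), hT]
      refine Finset.sum_congr rfl fun k _ => ?_
      rw [show vInto G c k = (starRingEnd ℂ) (vInto G v k) from vInto_conj G v k]
    rw [← lhs, rhs]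
  have EB : (starRingEnd ℂ) μ * (μ * Sc + P) = T := by
    have lhs : ∑ e : G.Dart, c e * (μ * v e + v e.symm) = μ * Sc + P := by
      have expand : ∀ e : G.Dart, c e * (μ * v e + v e.symm)
          = μ * (c e * v e) + c e * v e.symm := fun e => by ring
      rw [Finset.sum_congr rfl fun e _ => expand e, Finset.sum_add_distrib,
        ← Finset.mul_sum]
    have rhs : ∑ e : G.Dart, c e * (μ * v e + v e.symm)
        = ∑ k, vInto G v k * (starRingEnd ℂ) (vFrom G v k) := by
      have step1 : ∀ e : G.Dart, c e * (μ * v e + v e.symm)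
          = vInto G v e.fst * c e := fun e => by rw [pair_eq G v μ heig e]; ring
      rw [Finset.sum_congr rfl fun e _ => step1 e, fiber_fst G c (fun k => vInto G v k)]
      refine Finset.sum_congr rfl fun k _ => ?_
      rw [show vFrom G c k = (starRingEnd ℂ) (vFrom G v k) from vFrom_conj G v k]
    rw [lhs] at rhs
    calc (starRingEnd ℂ) μ * (μ * Sc + P)
        = (starRingEnd ℂ) μ * ∑ k, vInto G v k * (starRingEnd ℂ) (vFrom G v k) := by rw [rhs]
      _ = ∑ k, vInto G v k * (starRingEnd ℂ) (μ * vFrom G v k) := by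
          rw [Finset.mul_sum]
          refine Finset.sum_congr rfl fun k _ => ?_
          rw [RingHom.map_mul]
          ring
      _ = T := by
          rw [hT]
          exact Finset.sum_congr rfl fun k _ => by rw [hμF k]
  have key : ((starRingEnd ℂ) μ * μ - 1) * Sc + ((starRingEnd ℂ) μ - μ) * P = 0 := by
    linear_combination EB - EA
  set σ : ℝ := ∑ e : G.Dart, Complex.normSq (v e) with hσdef
  have hSr : Sc = (σ : ℂ) := by
    rw [hS, hσdef]
    push_cast
    refine Finset.sum_congr rfl fun e _ => ?_
    rw [hc, mul_comm, Complex.mul_conj]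
  have hPr : P = ((P.re : ℝ) : ℂ) := (Complex.conj_eq_iff_re.mp hPreal).symm
  have hμμ : (starRingEnd ℂ) μ * μ = (Complex.normSq μ : ℂ) := by
    rw [mul_comm, Complex.mul_conj]
  rw [hSr, hμμ] at key
  rw [hPr] at key
  have hre := congrArg Complex.re key
  simp only [Complex.add_re, Complex.mul_re, Complex.sub_re, Complex.ofReal_re,
    Complex.ofReal_im, Complex.sub_im, Complex.one_re, Complex.one_im, Complex.zero_re,
    Complex.conj_re, Complex.conj_im, mul_zero, sub_zero, zero_mul, add_zero] at hre
  have hre2 : (Complex.normSq μ - 1) * σ = 0 := by linarith [hre]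
  have hσpos : 0 < σ := by
    have hex : ∃ e : G.Dart, v e ≠ 0 := by
      by_contra h
      push_neg at h
      exact hv (funext h)
    obtain ⟨e, he⟩ := hex
    exact Finset.sum_pos' (fun i _ => Complex.normSq_nonneg _)
      ⟨e, Finset.mem_univ e, Complex.normSq_pos.mpr he⟩
  rcases mul_eq_zero.mp hre2 with h | h
  · linarith
  · exact absurd h (ne_of_gt hσpos)

lemma const_of_dart (f : V → ℂ) (hconn : G.Connected)
    (hf : ∀ e : G.Dart, f e.fst = f e.snd) (k l : V) : f k = f l := by
  obtain ⟨w⟩ := hconn.preconnected k l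
  induction w with
  | nil => rfl
  | cons h p ih => exact (hf ⟨(_, _), h⟩).trans ih

lemma deg_two_of_sum (hdeg : ∀ u : V, 2 ≤ G.degree u)
    (hsum : ∑ j, ((G.degree j : ℂ) - 2) = 0) (k : V) : (G.degree k : ℂ) - 2 = 0 := by
  have hcast : ∀ j : V, ((G.degree j : ℂ) - 2) = ((G.degree j - 2 : ℕ) : ℂ) := by
    intro j
    rw [Nat.cast_sub (hdeg j)]
    norm_num
  rw [Finset.sum_congr rfl fun j _ => hcast j, ← Nat.cast_sum] at hsum
  have h0 : ∑ j, (G.degree j - 2) = 0 := by exact_mod_cast hsum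
  have hk := (Finset.sum_eq_zero_iff.mp h0) k (Finset.mem_univ k)
  rw [hcast k, hk]
  simp

lemma nonleaky_one (hconn : G.Connected) (hdeg : ∀ u : V, 2 ≤ G.degree u)
    (heig : (nbMatrix G).mulVec v = (1:ℂ) • v) : NonLeaky G v := by
  have hpair : ∀ e : G.Dart, v e + v e.symm = vInto G v e.fst := by
    intro e
    linear_combination pair_eq G v 1 heig e
  have hEq : ∀ e : G.Dart, vInto G v e.fst = vInto G v e.snd := by
    intro e
    have h1 := hpair e
    have h2 : v e.symm + v e = vInto G v e.snd := hpair e.symm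
    linear_combination h2 - h1
  have hconst := const_of_dart G (fun k => vInto G v k) hconn hEq
  have s1 : ∑ e : G.Dart, v e = ∑ k, vInto G v k := by
    have h := fiber_snd G v (fun _ => (1:ℂ))
    simpa using h
  have s3 : ∑ e : G.Dart, vInto G v e.fst = ∑ k, (G.degree k : ℂ) * vInto G v k := by
    calc ∑ e : G.Dart, vInto G v e.fst = ∑ e : G.Dart, vInto G v e.fst * 1 := by simp
    _ = ∑ k, vInto G v k * vFrom G (fun _ => (1:ℂ)) k :=
        fiber_fst G (fun _ => (1:ℂ)) (fun k => vInto G v k)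
    _ = ∑ k, (G.degree k:ℂ) * vInto G v k := by
        refine Finset.sum_congr rfl fun k _ => ?_
        rw [vFrom_const]; ring
  have s2 : ∑ e : G.Dart, (v e + v e.symm) = 2 * ∑ e : G.Dart, v e := by
    rw [Finset.sum_add_distrib, sum_symm G v]; ring
  have main : 2 * ∑ k, vInto G v k = ∑ k, (G.degree k : ℂ) * vInto G v k := by
    rw [← s1, ← s2, ← s3]
    exact Finset.sum_congr rfl fun e _ => hpair e
  intro k
  by_cases hk : vInto G v k = 0
  · rw [hk]; ring
  · have hrw : ∀ j : V, vInto G v j = vInto G v k := fun j => hconst j k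
    have main2 : (∑ j, ((G.degree j : ℂ) - 2)) * vInto G v k = 0 := by
      rw [Finset.sum_mul]
      have hpt : ∀ j : V, ((G.degree j:ℂ) - 2) * vInto G v k
          = (G.degree j:ℂ) * vInto G v j - 2 * vInto G v j := by
        intro j; rw [hrw j]; ring
      rw [Finset.sum_congr rfl fun j _ => hpt j, Finset.sum_sub_distrib, ← Finset.mul_sum]
      linear_combination -main
    rcases mul_eq_zero.mp main2 with h | h
    · rw [deg_two_of_sum G hdeg h k]; ring
    · exact absurd h hk

lemma nonleaky_negone (hconn : G.Connected) (hdeg : ∀ u : V, 2 ≤ G.degree u)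
    (heig : (nbMatrix G).mulVec v = (-1:ℂ) • v) : NonLeaky G v := by
  have hpair : ∀ e : G.Dart, -v e + v e.symm = vInto G v e.fst := by
    intro e
    linear_combination pair_eq G v (-1) heig e
  have hOpp : ∀ e : G.Dart, vInto G v e.fst = - vInto G v e.snd := by
    intro e
    have h1 := hpair e
    have h2 : -v e.symm + v e = vInto G v e.snd := hpair e.symm
    linear_combination -h1 - h2
  have hSq : ∀ k l, vInto G v k * vInto G v k = vInto G v l * vInto G v l := by
    refine const_of_dart G (fun k => vInto G v k * vInto G v k) hconn ?_
    intro e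
    rw [hOpp e]; ring
  have s1 : ∑ e : G.Dart, vInto G v e.fst * v e = ∑ k, vInto G v k * vFrom G v k :=
    fiber_fst G v (fun k => vInto G v k)
  have s2 : ∑ e : G.Dart, vInto G v e.snd * v e = ∑ k, vInto G v k * vInto G v k :=
    fiber_snd G v (fun k => vInto G v k)
  have s3 : ∑ e : G.Dart, vInto G v e.snd * v e = ∑ e : G.Dart, vInto G v e.fst * v e.symm :=
    sum_reindex G _ _ (fun e => rfl)
  have hR : ∑ e : G.Dart, vInto G v e.fst * (v e + v e.symm) = 0 := by
    have h1 : ∑ e : G.Dart, vInto G v e.fst * (v e + v e.symm)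
        = ∑ e : G.Dart, -(vInto G v e.fst * (v e + v e.symm)) := by
      refine sum_reindex G _ _ ?_
      intro e
      show vInto G v e.fst * (v e + v e.symm) = -(vInto G v e.snd * (v e.symm + v e))
      rw [hOpp e]; ring
    rw [Finset.sum_neg_distrib] at h1
    have h2 : (2:ℂ) * ∑ e : G.Dart, vInto G v e.fst * (v e + v e.symm) = 0 := by
      linear_combination h1
    exact (mul_eq_zero.mp h2).resolve_left two_ne_zero
  have expand : ∑ e : G.Dart, vInto G v e.fst * (v e + v e.symm)
      = (∑ e : G.Dart, vInto G v e.fst * v e) + ∑ e : G.Dart, vInto G v e.fst * v e.symm := by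
    rw [← Finset.sum_add_distrib]
    exact Finset.sum_congr rfl fun e _ => by ring
  have key : (∑ k, vInto G v k * vFrom G v k) + ∑ k, vInto G v k * vInto G v k = 0 := by
    rw [← s1, ← s2, s3, ← expand]
    exact hR
  have key2 : ∑ k, (((2:ℂ) - (G.degree k:ℂ)) * (vInto G v k * vInto G v k)) = 0 := by
    calc ∑ k, (((2:ℂ) - (G.degree k:ℂ)) * (vInto G v k * vInto G v k))
        = ∑ k, (vInto G v k * vFrom G v k + vInto G v k * vInto G v k) := by
          refine Finset.sum_congr rfl fun k _ => ?_
          linear_combination (vInto G v k) * from_eq G v (-1) heig k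
      _ = (∑ k, vInto G v k * vFrom G v k) + ∑ k, vInto G v k * vInto G v k :=
          Finset.sum_add_distrib
      _ = 0 := key
  intro k
  by_cases hk : vInto G v k = 0
  · rw [hk]; ring
  · have main2 : (∑ j, (((2:ℂ) - (G.degree j:ℂ)))) * (vInto G v k * vInto G v k) = 0 := by
      rw [Finset.sum_mul, ← key2]
      exact Finset.sum_congr rfl fun j _ => by rw [hSq j k]
    rcases mul_eq_zero.mp main2 with h | h
    · have h' : ∑ j, ((G.degree j : ℂ) - 2) = 0 := by
        have h2 : ∑ j, ((2:ℂ) - (G.degree j:ℂ)) = - ∑ j, ((G.degree j:ℂ) - 2) := by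
          rw [← Finset.sum_neg_distrib]
          exact Finset.sum_congr rfl fun j _ => by ring
        rw [h2, neg_eq_zero] at h
        exact h
      rw [deg_two_of_sum G hdeg h' k]; ring
    · exact absurd (mul_self_eq_zero.mp h) hk

lemma nonleaky_im (heig : (nbMatrix G).mulVec v = μ • v) (hdeg : ∀ u : V, 2 ≤ G.degree u)
    (hnorm : Complex.normSq μ = 1) (hIm : μ.im ≠ 0) : NonLeaky G v := by
  have hμW : ∀ k, μ * vInto G (fun e => vInto G v e.fst) k
      = (μ^2 + (G.degree k:ℂ) - 1) * vInto G v k := by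
    intro k
    have h1 := into_fst_eq G v μ heig k
    have h2 := from_eq G v μ heig k
    linear_combination μ * h1 + h2
  set S : ℂ := ∑ e : G.Dart, (starRingEnd ℂ) (vInto G v e.snd) * vInto G v e.fst with hSdef
  have hS1 : S = ∑ k, (starRingEnd ℂ) (vInto G v k) * vInto G (fun e => vInto G v e.fst) k := by
    rw [hSdef]
    exact fiber_snd G (fun e => vInto G v e.fst) (fun k => (starRingEnd ℂ) (vInto G v k))
  have hSreal : (starRingEnd ℂ) S = S := by
    rw [hSdef, map_sum]
    refine sum_reindex G _ _ ?_
    intro e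
    simp only [_root_.map_mul, Complex.conj_conj]
    exact mul_comm _ _
  have E1 : μ * S = ∑ k, (μ^2 + (G.degree k:ℂ) - 1) * (Complex.normSq (vInto G v k) : ℂ) := by
    rw [hS1, Finset.mul_sum]
    refine Finset.sum_congr rfl fun k _ => ?_
    calc μ * ((starRingEnd ℂ) (vInto G v k) * vInto G (fun e => vInto G v e.fst) k)
        = (starRingEnd ℂ) (vInto G v k) * (μ * vInto G (fun e => vInto G v e.fst) k) := by ring
      _ = (starRingEnd ℂ) (vInto G v k) * ((μ^2 + (G.degree k:ℂ) - 1) * vInto G v k) := by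
          rw [hμW k]
      _ = (μ^2 + (G.degree k:ℂ) - 1) * ((vInto G v k) * (starRingEnd ℂ) (vInto G v k)) := by
          ring
      _ = (μ^2 + (G.degree k:ℂ) - 1) * (Complex.normSq (vInto G v k) : ℂ) := by
          rw [Complex.mul_conj]
  have E2 : (starRingEnd ℂ) μ * S
      = ∑ k, ((starRingEnd ℂ) μ^2 + (G.degree k:ℂ) - 1) * (Complex.normSq (vInto G v k) : ℂ) := by
    have hconj := congrArg (starRingEnd ℂ) E1
    rw [_root_.map_mul, hSreal, map_sum] at hconj
    rw [hconj]
    refine Finset.sum_congr rfl fun k _ => ?_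
    simp only [_root_.map_mul, map_sub, map_add, map_pow, map_natCast, _root_.map_one,
      Complex.conj_ofReal]
  have hunit : μ * (starRingEnd ℂ) μ = 1 := by
    rw [Complex.mul_conj, hnorm]
    simp
  have E3 : (μ - (starRingEnd ℂ) μ)
      * ∑ k, (((2:ℂ) - (G.degree k:ℂ)) * (Complex.normSq (vInto G v k):ℂ)) = 0 := by
    have h4 : (starRingEnd ℂ) μ * (μ * S) - μ * ((starRingEnd ℂ) μ * S) = 0 := by ring
    rw [E1, E2, Finset.mul_sum, Finset.mul_sum, ← Finset.sum_sub_distrib] at h4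
    rw [Finset.mul_sum, ← h4]
    refine Finset.sum_congr rfl fun k _ => ?_
    linear_combination (-(Complex.normSq (vInto G v k):ℂ) * (μ - (starRingEnd ℂ) μ)) * hunit
  have hμne : μ - (starRingEnd ℂ) μ ≠ 0 := by
    intro h
    apply hIm
    have him := congrArg Complex.im h
    simp only [Complex.sub_im, Complex.conj_im, Complex.zero_im] at him
    linarith
  have hsum0 : ∑ k, (((2:ℂ) - (G.degree k:ℂ)) * (Complex.normSq (vInto G v k):ℂ)) = 0 :=
    (mul_eq_zero.mp E3).resolve_left hμne
  have hreal : ∑ k, (((2:ℝ) - (G.degree k:ℝ)) * Complex.normSq (vInto G v k)) = 0 := by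
    have hcast : ((∑ k, (((2:ℝ) - (G.degree k:ℝ)) * Complex.normSq (vInto G v k)) : ℝ) : ℂ) = 0 := by
      push_cast
      exact hsum0
    exact_mod_cast hcast
  intro k
  have h5 : ∀ j ∈ Finset.univ, (0:ℝ) ≤ ((G.degree j:ℝ) - 2) * Complex.normSq (vInto G v j) := by
    intro j _
    apply mul_nonneg
    · have hj := hdeg j
      have : (2:ℝ) ≤ (G.degree j : ℝ) := by exact_mod_cast hj
      linarith
    · exact Complex.normSq_nonneg _
  have hflip : ∑ j, (((G.degree j:ℝ) - 2) * Complex.normSq (vInto G v j)) = 0 := by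
    have h2 : ∑ j, (((G.degree j:ℝ) - 2) * Complex.normSq (vInto G v j))
        = - ∑ j, (((2:ℝ) - (G.degree j:ℝ)) * Complex.normSq (vInto G v j)) := by
      rw [← Finset.sum_neg_distrib]
      exact Finset.sum_congr rfl fun j _ => by ring
    rw [h2, hreal, neg_zero]
  have hterm := (Finset.sum_eq_zero_iff_of_nonneg h5).mp hflip k (Finset.mem_univ k)
  rcases mul_eq_zero.mp hterm with h | h
  · have hd : (G.degree k : ℝ) = 2 := by linarith
    have hd2 : G.degree k = 2 := by exact_mod_cast hd
    rw [hd2]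
    norm_num
  · rw [Complex.normSq_eq_zero.mp h, mul_zero]

lemma mu_isIntegral (hv : v ≠ 0) (heig : (nbMatrix G).mulVec v = μ • v) :
    IsIntegral ℤ μ := by
  classical
  set B0 : Matrix G.Dart G.Dart ℤ :=
    (fun e f => if f.snd = e.fst ∧ f.fst ≠ e.snd then 1 else 0) with hB0
  have hmap : B0.map (Int.cast : ℤ → ℂ) = nbMatrix G := by
    ext e f
    rw [Matrix.map_apply]
    simp [hB0, nbMatrix, Matrix.map_apply, apply_ite (Int.cast : ℤ → ℂ)]
  have hdet : (nbMatrix G - μ • 1).det = 0 := by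
    rw [← Matrix.exists_mulVec_eq_zero_iff]
    refine ⟨v, hv, ?_⟩
    rw [Matrix.sub_mulVec, Matrix.smul_mulVec, Matrix.one_mulVec, heig, sub_self]
  refine ⟨B0.charpoly, B0.charpoly_monic, ?_⟩
  have h1 : Polynomial.eval₂ (algebraMap ℤ ℂ) μ B0.charpoly
      = Polynomial.eval μ (B0.charpoly.map (algebraMap ℤ ℂ)) := by
    rw [Polynomial.eval₂_eq_eval_map]
  have h2 : B0.charpoly.map (algebraMap ℤ ℂ) = (nbMatrix G).charpoly := by
    rw [← Matrix.charpoly_map, show (algebraMap ℤ ℂ) = (Int.castRingHom ℂ) from rfl]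
    congr 1
  have h3 : Polynomial.eval μ (nbMatrix G).charpoly
      = ((Matrix.scalar G.Dart μ) - nbMatrix G).det := by
    rw [Matrix.charpoly, _root_.eval_det, Matrix.matPolyEquiv_charmatrix]
    simp
  have h4 : ((Matrix.scalar G.Dart μ) - nbMatrix G).det = 0 := by
    have hsc : (Matrix.scalar G.Dart μ) = μ • (1 : Matrix G.Dart G.Dart ℂ) := by
      rw [Matrix.scalar_apply, Matrix.smul_one_eq_diagonal]
    have hneg : (Matrix.scalar G.Dart μ) - nbMatrix G = -(nbMatrix G - μ • 1) := by
      rw [hsc]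
      exact (neg_sub _ _).symm
    rw [hneg, Matrix.det_neg, hdet, mul_zero]
  rw [h1, h2, h3, h4]

lemma exists_kernel_of_map {K L : Type*} [Field K] [Field L] {a b : Type*}
    [Fintype a] [Fintype b] [DecidableEq a] [DecidableEq b]
    (M : Matrix a b K) (f : K →+* L) (w : b → L) (hw : w ≠ 0)
    (h : (M.map f).mulVec w = 0) : ∃ u : b → K, u ≠ 0 ∧ M.mulVec u = 0 := by
  by_contra hcon
  push_neg at hcon
  have hker : LinearMap.ker (Matrix.toLin' M) = ⊥ := by
    rw [LinearMap.ker_eq_bot']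
    intro u hu
    by_contra h0
    exact hcon u h0 (by rwa [Matrix.toLin'_apply] at hu)
  obtain ⟨g, hg⟩ := (Matrix.toLin' M).exists_leftInverse_of_injective hker
  have hNM : (LinearMap.toMatrix' g) * M = 1 := by
    rw [← LinearMap.toMatrix'_toLin' M, ← LinearMap.toMatrix'_comp, hg]
    exact LinearMap.toMatrix'_id
  have hmap : ((LinearMap.toMatrix' g).map f) * (M.map f) = 1 := by
    rw [← Matrix.map_mul, hNM, Matrix.map_one (⇑f) (_root_.map_zero f) (_root_.map_one f)]
  have hzero : w = 0 := by
    have h1 : ((LinearMap.toMatrix' g).map f).mulVec ((M.map f).mulVec w) = w := by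
      rw [Matrix.mulVec_mulVec, hmap, Matrix.one_mulVec]
    rw [h, Matrix.mulVec_zero] at h1
    exact h1.symm
  exact hw hzero

end NBAux

/-- If every vertex has degree at least `2` and `B·v = λ·v` with `λ ≠ 0`,
`v ≠ 0`, then `v` is non-leaky if and only if `λ` is a root of unity. -/
theorem nbMatrix_nonLeaky_iff_rootOfUnity
    [DecidableEq V] [Fintype V] (G : SimpleGraph V) [DecidableRel G.Adj]
    (hconn : G.Connected) (hdeg : ∀ u : V, 2 ≤ G.degree u)
    (v : G.Dart → ℂ) (μ : ℂ) (hμ : μ ≠ 0) (hv : v ≠ 0)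
    (heig : (nbMatrix G).mulVec v = μ • v) :
    NonLeaky G v ↔ ∃ r : ℕ, 1 ≤ r ∧ μ ^ r = 1 := by
  classical
  constructor
  · intro hnl
    have hint : IsIntegral ℤ μ := NBAux.mu_isIntegral G v μ hv heig
    have hintQ : IsIntegral ℚ μ := hint.tower_top
    let K := IntermediateField.adjoin ℚ ({μ} : Set ℂ)
    haveI hfd : FiniteDimensional ℚ K := IntermediateField.adjoin.finiteDimensional hintQ
    haveI : NumberField K := { to_charZero := inferInstance, to_finiteDimensional := hfd }
    set x : K := IntermediateField.AdjoinSimple.gen ℚ μ with hxdef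
    have hx : algebraMap K ℂ x = μ := IntermediateField.AdjoinSimple.algebraMap_gen ℚ μ
    have hxint : IsIntegral ℤ x := by
      have h0 : IsIntegral ℤ (algebraMap K ℂ x) := by rw [hx]; exact hint
      exact (isIntegral_algebraMap_iff (algebraMap K ℂ).injective).mp h0
    set M : Matrix (G.Dart ⊕ V) G.Dart K :=
      Sum.elim
        (fun d e => (if e.snd = d.fst ∧ e.fst ≠ d.snd then (1:K) else 0)
          - (if e = d then x else 0))
        (fun k e => if e.snd = k then ((G.degree k : K) - 2) else 0) with hM
    have hcomp1 : ∀ (f : K →+* ℂ) (w : G.Dart → ℂ) (d : G.Dart),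
        (M.map f).mulVec w (Sum.inl d) = (nbMatrix G).mulVec w d - f x * w d := by
      intro f w d
      have hfx : f x * w d = ∑ e : G.Dart, (if e = d then f x * w e else 0) := by
        rw [Finset.sum_ite_eq' Finset.univ d (fun e => f x * w e)]
        simp
      simp only [Matrix.mulVec, dotProduct, Matrix.map_apply, Matrix.map, Matrix.of_apply, hM, Sum.elim_inl,
        nbMatrix]
      rw [hfx, ← Finset.sum_sub_distrib]
      refine Finset.sum_congr rfl fun e _ => ?_
      rw [map_sub, apply_ite f, apply_ite f, _root_.map_one, map_zero]
      by_cases h1 : e.snd = d.fst ∧ e.fst ≠ d.snd <;> by_cases h2 : e = d <;>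
        simp [h1, h2, sub_mul]
    have hcomp2 : ∀ (f : K →+* ℂ) (w : G.Dart → ℂ) (k : V),
        (M.map f).mulVec w (Sum.inr k) = ((G.degree k : ℂ) - 2) * vInto G w k := by
      intro f w k
      simp only [Matrix.mulVec, dotProduct, Matrix.map_apply, Matrix.map, Matrix.of_apply, hM, Sum.elim_inr,
        vInto, Finset.mul_sum]
      refine Finset.sum_congr rfl fun e _ => ?_
      by_cases h1 : e.snd = k <;>
        simp [h1, apply_ite f, map_sub, map_natCast, map_ofNat]
    have hMiff : ∀ (f : K →+* ℂ) (w : G.Dart → ℂ),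
        (M.map f).mulVec w = 0 ↔ ((nbMatrix G).mulVec w = f x • w ∧ NonLeaky G w) := by
      intro f w
      constructor
      · intro h
        refine ⟨funext fun d => ?_, fun k => ?_⟩
        · have hd := congrFun h (Sum.inl d)
          rw [hcomp1 f w d] at hd
          have hd2 : (nbMatrix G).mulVec w d - f x * w d = 0 := hd
          have := sub_eq_zero.mp hd2
          simpa [Pi.smul_apply, smul_eq_mul] using this
        · have hk := congrFun h (Sum.inr k)
          rw [hcomp2 f w k] at hk
          exact hk
      · rintro ⟨h1, h2⟩
        funext i
        cases i with
        | inl d =>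
          show (M.map f).mulVec w (Sum.inl d) = 0
          rw [hcomp1 f w d, congrFun h1 d]
          simp [Pi.smul_apply, smul_eq_mul]
        | inr k =>
          show (M.map f).mulVec w (Sum.inr k) = 0
          rw [hcomp2 f w k]
          exact h2 k
    have hbase : (M.map (algebraMap K ℂ)).mulVec v = 0 :=
      (hMiff (algebraMap K ℂ) v).mpr ⟨by rw [hx]; exact heig, hnl⟩
    obtain ⟨u, hu0, hu⟩ := NBAux.exists_kernel_of_map M (algebraMap K ℂ) v hv hbase
    have hnorm : ∀ φ : K →+* ℂ, ‖φ x‖ = 1 := by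
      intro φ
      have hw0 : (fun e => φ (u e)) ≠ 0 := by
        intro hz
        apply hu0
        funext e
        have he := congrFun hz e
        exact φ.injective (by simpa using he)
      have hker : (M.map φ).mulVec (fun e => φ (u e)) = 0 := by
        funext i
        have h0 := congrFun hu i
        have hφ0 : φ (M.mulVec u i) = 0 := by rw [h0]; simp
        calc (M.map φ).mulVec (fun e => φ (u e)) i
            = ∑ e : G.Dart, φ (M i e) * φ (u e) := rfl
          _ = φ (∑ e : G.Dart, M i e * u e) := by
              rw [map_sum]
              exact Finset.sum_congr rfl fun e _ => (map_mul φ _ _).symm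
          _ = φ (M.mulVec u i) := rfl
          _ = 0 := hφ0
      obtain ⟨hweig, hwnl⟩ := (hMiff φ _).mp hker
      have habs := NBAux.normSq_eq_one G (fun e => φ (u e)) (φ x) hweig hwnl hw0
      have habs2 : ‖φ x‖ = 1 := by
        rw [Complex.norm_def, habs, Real.sqrt_one]
      simpa using habs2
    obtain ⟨n, hn, hxn⟩ := NumberField.Embeddings.pow_eq_one_of_norm_eq_one K ℂ hxint hnorm
    refine ⟨n, hn, ?_⟩
    have hfinal := congrArg (algebraMap K ℂ) hxn
    rw [map_pow, hx, _root_.map_one] at hfinal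
    exact hfinal
  · rintro ⟨r, hr, hμr⟩
    have habs : Complex.normSq μ = 1 := by
      have h1 : Complex.normSq μ ^ r = 1 := by
        rw [← map_pow, hμr, Complex.normSq_one]
      have h2 : (0:ℝ) ≤ Complex.normSq μ := Complex.normSq_nonneg μ
      by_contra hne
      rcases lt_or_gt_of_ne hne with hlt | hgt
      · have := pow_lt_one₀ h2 hlt (by omega : r ≠ 0)
        rw [h1] at this
        exact lt_irrefl 1 this
      · have := one_lt_pow₀ hgt (by omega : r ≠ 0)
        rw [h1] at this
        exact lt_irrefl 1 this
    by_cases hIm : μ.im = 0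
    · have hre : μ.re * μ.re = 1 := by
        have h3 := habs
        rw [Complex.normSq_apply, hIm] at h3
        linarith
      have hcase : μ = 1 ∨ μ = -1 := by
        have h3 : (μ.re - 1) * (μ.re + 1) = 0 := by linear_combination hre
        rcases mul_eq_zero.mp h3 with h | h
        · left
          apply Complex.ext <;> simp [hIm] <;> linarith
        · right
          apply Complex.ext <;> simp [hIm] <;> linarith
      rcases hcase with h | h
      · exact NBAux.nonleaky_one G v hconn hdeg (by rw [← h]; exact heig)
      · exact NBAux.nonleaky_negone G v hconn hdeg (by rw [← h]; exact heig)
    · exact NBAux.nonleaky_im G v μ heig hdeg habs hIm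
end

section
/- Let C be a set of r ≥ 3 vertices inducing a cycle in G, and suppose at least one vertex of C has degree greater than 2 in G. Let λ ∈ ℂ satisfy λ^r = 1 and λ² ≠ 1. Then the linear subspace { v : B·v = λ·v and v is supported on C } has dimension at most 1; in particular, an eigenvector of B for λ supported on C, if it exists, is unique up to a scalar multiple. -/
open Matrix Polynomial BigOperators

variable {V : Type*}

/-- A vertex set `C` induces a cycle if the subgraph of `G` induced by `C` is connected and
2-regular (every vertex of `C` has exactly two neighbors inside `C`). -/
def InducesCycle (G : SimpleGraph V) (C : Set V) : Prop :=
  (G.induce C).Connected ∧ ∀ u ∈ C, {w | w ∈ C ∧ G.Adj u w}.ncard = 2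

/-- A vector `v` indexed by darts is supported on a vertex set `C` if `v_{k→l} = 0` whenever
`k ∉ C` or `l ∉ C`. -/
def SupportedOn (G : SimpleGraph V) (v : G.Dart → ℂ) (C : Set V) : Prop :=
  ∀ e : G.Dart, (e.fst ∉ C ∨ e.snd ∉ C) → v e = 0

/-- The subspace of dart-indexed vectors supported on the vertex set `C`. -/
noncomputable def supportedSubmodule (G : SimpleGraph V) (C : Set V) : Submodule ℂ (G.Dart → ℂ) where
  carrier := {v | SupportedOn G v C}
  add_mem' := by
    intro a b ha hb e he
    simp only [Pi.add_apply, ha e he, hb e he, add_zero]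
  zero_mem' := by intro e _; rfl
  smul_mem' := by
    intro c a ha e he
    simp only [Pi.smul_apply, ha e he, smul_zero]

section Aux

variable [DecidableEq V] [Fintype V] {G : SimpleGraph V} [DecidableRel G.Adj]

lemma nb_eigen_eq {μ : ℂ} {v : G.Dart → ℂ}
    (hv : v ∈ LinearMap.ker (nbMatrix G - μ • 1).mulVecLin) (e : G.Dart) :
    ∑ f : G.Dart, (if f.snd = e.fst ∧ f.fst ≠ e.snd then v f else 0) = μ * v e := by
  have h := congrFun (LinearMap.mem_ker.mp hv) e
  classical
  simp only [Matrix.mulVecLin_apply, Matrix.mulVec, dotProduct,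
    Matrix.sub_apply, Matrix.smul_apply, Matrix.one_apply, sub_mul,
    Finset.sum_sub_distrib, smul_eq_mul, mul_ite, mul_one, mul_zero, ite_mul, zero_mul,
    Pi.zero_apply, sub_eq_zero, nbMatrix, one_mul] at h
  rw [h]
  simp [Finset.sum_ite_eq]

lemma key_rel {μ : ℂ} {v : G.Dart → ℂ} {C : Set V}
    (hv : v ∈ LinearMap.ker (nbMatrix G - μ • 1).mulVecLin) (hsupp : SupportedOn G v C)
    {x a b : V} (hab : a ≠ b)
    (hN : {w | w ∈ C ∧ G.Adj x w} = {a, b})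
    {da db : G.Dart} (hda : da.toProd = (a, x)) (hdb : db.toProd = (b, x))
    {e : G.Dart} (hex : e.fst = x) :
    μ * v e = (if a ≠ e.snd then v da else 0) + (if b ≠ e.snd then v db else 0) := by
  classical
  rw [← nb_eigen_eq hv e]
  have hterm : ∀ f : G.Dart,
      (if f.snd = e.fst ∧ f.fst ≠ e.snd then v f else 0) =
      (if f = da ∧ a ≠ e.snd then v f else 0) + (if f = db ∧ b ≠ e.snd then v f else 0) := by
    intro f
    by_cases hfa : f = da
    · subst hfa
      have h1 : f.snd = e.fst := by
        show f.toProd.2 = _; rw [hda, hex]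
      have h2 : f.fst = a := by show f.toProd.1 = a; rw [hda]
      have h3 : ¬ (f = db) := by
        intro h; rw [h, hdb] at hda; exact hab (congrArg Prod.fst hda.symm)
      by_cases h4 : a ≠ e.snd <;> simp [h1, h2, h3, h4]
    · by_cases hfb : f = db
      · subst hfb
        have h1 : f.snd = e.fst := by show f.toProd.2 = _; rw [hdb, hex]
        have h2 : f.fst = b := by show f.toProd.1 = b; rw [hdb]
        by_cases h4 : b ≠ e.snd <;> simp [h1, h2, hfa, h4]
      · have h1 : (if f = da ∧ a ≠ e.snd then v f else 0) = 0 := if_neg (fun h => hfa h.1)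
        have h2 : (if f = db ∧ b ≠ e.snd then v f else 0) = 0 := if_neg (fun h => hfb h.1)
        rw [h1, h2, add_zero]
        by_cases hc : f.snd = e.fst ∧ f.fst ≠ e.snd
        · rw [if_pos hc]
          apply hsupp f
          left
          intro hfC
          have hadj : G.Adj x f.fst := by
            have := f.adj
            rw [show f.snd = x from hc.1.trans hex] at this
            exact this.symm
          have : f.fst ∈ ({a, b} : Set V) := by
            rw [← hN]; exact ⟨hfC, hadj⟩
          rcases this with h | h
          · exact hfa (SimpleGraph.Dart.ext _ _ (Prod.ext (by rw [hda]; simpa using h)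
              (by rw [hda]; exact hc.1.trans hex)))
          · exact hfb (SimpleGraph.Dart.ext _ _ (Prod.ext (by rw [hdb]; simpa using h)
              (by rw [hdb]; exact hc.1.trans hex)))
        · rw [if_neg hc]
  rw [Finset.sum_congr rfl (fun f _ => hterm f), Finset.sum_add_distrib]
  congr 1
  · by_cases h : a ≠ e.snd <;> simp [h, Finset.sum_ite_eq']
  · by_cases h : b ≠ e.snd <;> simp [h, Finset.sum_ite_eq']

/-- If both supported in-darts at `x` vanish, every dart out of `x` vanishes. -/
lemma dart_out_zero {μ : ℂ} (hμ0 : μ ≠ 0) {v : G.Dart → ℂ} {C : Set V}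
    (hv : v ∈ LinearMap.ker (nbMatrix G - μ • 1).mulVecLin) (hsupp : SupportedOn G v C)
    {x a b : V} (hab : a ≠ b) (hN : {w | w ∈ C ∧ G.Adj x w} = {a, b})
    {da db : G.Dart} (hda : da.toProd = (a, x)) (hdb : db.toProd = (b, x))
    (h0a : v da = 0) (h0b : v db = 0) {e : G.Dart} (hex : e.fst = x) : v e = 0 := by
  have h := key_rel hv hsupp hab hN hda hdb hex
  rw [h0a, h0b] at h
  simp only [ite_self, add_zero] at h
  exact (mul_eq_zero.mp h).resolve_left hμ0

/-- A supported dart into `x` is one of the two darts from the two `C`-neighbors of `x`. -/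
lemma dart_into_classify {C : Set V} {x c d : V}
    (hN : {w | w ∈ C ∧ G.Adj x w} = {c, d})
    {dc dd : G.Dart} (hdc : dc.toProd = (c, x)) (hdd : dd.toProd = (d, x))
    {e : G.Dart} (heC : e.fst ∈ C) (hex : e.snd = x) : e = dc ∨ e = dd := by
  have hadj : G.Adj x e.fst := by
    have := e.adj
    rw [show e.snd = x from hex] at this
    exact this.symm
  have hmem : e.fst ∈ ({c, d} : Set V) := by rw [← hN]; exact ⟨heC, hadj⟩
  rcases hmem with h | h
  · exact Or.inl (SimpleGraph.Dart.ext _ _ (Prod.ext (by rw [hdc]; simpa using h)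
      (by rw [hdc]; exact hex)))
  · exact Or.inr (SimpleGraph.Dart.ext _ _ (Prod.ext (by rw [hdd]; simpa using h)
      (by rw [hdd]; exact hex)))

lemma walk_induct {H : SimpleGraph V} {P : V → Prop}
    (hstep : ∀ x y, H.Adj x y → P x → P y) {x y : V} (p : H.Walk x y) : P x → P y := by
  induction p with
  | nil => exact id
  | cons h _ ih => exact fun hx => ih (hstep _ _ h hx)

end Aux

/-- Let `C` be a set of `r ≥ 3` vertices inducing a cycle, at least one of
which has degree greater than `2` in `G`, and let `λ^r = 1`, `λ² ≠ 1`. Then the space of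
eigenvectors of `B` for `λ` supported on `C` has dimension at most `1`. -/
theorem nbMatrix_unit_eigenvector_on_cycle_unique
    [DecidableEq V] [Fintype V] (G : SimpleGraph V) [DecidableRel G.Adj]
    (hconn : G.Connected) (C : Set V) (r : ℕ) (hr : 3 ≤ r) (hcard : C.ncard = r)
    (hcyc : InducesCycle G C) (hbig : ∃ u ∈ C, 2 < G.degree u)
    (μ : ℂ) (hroot : μ ^ r = 1) (hμ2 : μ ^ 2 ≠ 1) :
    Module.finrank ℂ
      ↥(LinearMap.ker (nbMatrix G - μ • 1).mulVecLin ⊓ supportedSubmodule G C) ≤ 1 := by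
  classical
  obtain ⟨u, hu, hdeg⟩ := hbig
  have hμ0 : μ ≠ 0 := by
    intro h
    rw [h, zero_pow (by omega)] at hroot
    exact zero_ne_one hroot
  obtain ⟨a, b, hab, hN⟩ := Set.ncard_eq_two.mp (hcyc.2 u hu)
  have haC : a ∈ C ∧ G.Adj u a := by
    have : a ∈ {w | w ∈ C ∧ G.Adj u w} := by rw [hN]; exact Set.mem_insert a {b}
    exact this
  have hbC : b ∈ C ∧ G.Adj u b := by
    have : b ∈ {w | w ∈ C ∧ G.Adj u w} := by rw [hN]; exact Set.mem_insert_of_mem a rfl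
    exact this
  set dau : G.Dart := ⟨(a, u), haC.2.symm⟩ with hdau_def
  set dbu : G.Dart := ⟨(b, u), hbC.2.symm⟩ with hdbu_def
  -- a neighbor of u outside C
  have hw : ∃ w, G.Adj u w ∧ w ∉ C := by
    by_contra h
    push_neg at h
    have hsub : G.neighborSet u ⊆ {w | w ∈ C ∧ G.Adj u w} := fun w hw => ⟨h w hw, hw⟩
    have h2 : (G.neighborSet u).ncard ≤ 2 := by
      rw [← hcyc.2 u hu]
      exact Set.ncard_le_ncard hsub (Set.toFinite _)
    have h3 : G.degree u ≤ 2 := by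
      have he : (G.neighborSet u).ncard = G.degree u := by
        rw [Set.ncard_eq_toFinset_card']
        rfl
      exact he ▸ h2
    omega
  -- the key linear map
  set S := LinearMap.ker (nbMatrix G - μ • 1).mulVecLin ⊓ supportedSubmodule G C with hS
  let φ : S →ₗ[ℂ] ℂ := (LinearMap.proj dau).comp S.subtype
  have hinj : Function.Injective φ := by
    rw [← LinearMap.ker_eq_bot]
    rw [Submodule.eq_bot_iff]
    rintro ⟨v, hvS⟩ hv0
    have hker : v ∈ LinearMap.ker (nbMatrix G - μ • 1).mulVecLin := hvS.1
    have hsupp : SupportedOn G v C := hvS.2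
    have h0a : v dau = 0 := hv0
    -- the out-of-C constraint at u
    obtain ⟨w, hadjw, hwC⟩ := hw
    have h0b : v dbu = 0 := by
      have hrel := key_rel (da := dau) (db := dbu) (e := ⟨(u, w), hadjw⟩) hker hsupp hab hN rfl rfl rfl
      have hvz : v ⟨(u, w), hadjw⟩ = 0 := hsupp _ (Or.inr hwC)
      rw [hvz, mul_zero, if_pos (fun h : a = w => hwC (h ▸ haC.1)),
        if_pos (fun h : b = w => hwC (h ▸ hbC.1))] at hrel
      have := hrel.symm
      rw [h0a, zero_add] at this
      exact this
    -- the propagating property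
    set P : C → Prop := fun x => ∀ e : G.Dart, e.fst ∈ C → e.snd ∈ C →
      (e.fst = ↑x ∨ e.snd = ↑x) → v e = 0 with hP
    have hPu : P ⟨u, hu⟩ := by
      intro e he1 he2 hor
      rcases hor with h | h
      · exact dart_out_zero (da := dau) (db := dbu) hμ0 hker hsupp hab hN rfl rfl h0a h0b h
      · rcases dart_into_classify (dc := dau) (dd := dbu) hN rfl rfl he1 h with h' | h'
        · rw [h']; exact h0a
        · rw [h']; exact h0b
    have hstep : ∀ x y : C, (G.induce C).Adj x y → P x → P y := by
      intro x y hxy hPx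
      have hadjxy : G.Adj ↑x ↑y := hxy
      obtain ⟨c, d, hcd, hNy⟩ := Set.ncard_eq_two.mp (hcyc.2 ↑y y.2)
      have hxin : (↑x : V) ∈ ({c, d} : Set V) := by
        rw [← hNy]; exact ⟨x.2, hadjxy.symm⟩
      have hzex : ∃ z, z ≠ (↑x : V) ∧ {w | w ∈ C ∧ G.Adj ↑y w} = {↑x, z} := by
        rcases hxin with h | h
        · exact ⟨d, fun hzz => hcd ((show (↑x : V) = c from h) ▸ hzz).symm,
            by rw [hNy, show (↑x : V) = c from h]⟩
        · exact ⟨c, fun hzz => hcd (hzz.trans (show (↑x : V) = d from h)),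
            by rw [hNy, show (↑x : V) = d from h, Set.pair_comm]⟩
      obtain ⟨z, hz, hNy'⟩ := hzex
      have hzmem : z ∈ {w | w ∈ C ∧ G.Adj ↑y w} := by
        rw [hNy']; exact Set.mem_insert_of_mem _ rfl
      have hxz : (↑x : V) ≠ z := fun h => hz h.symm
      set dxy : G.Dart := ⟨(↑x, ↑y), hadjxy⟩ with hdxy
      set dzy : G.Dart := ⟨(z, ↑y), hzmem.2.symm⟩ with hdzy
      set dyx : G.Dart := ⟨(↑y, ↑x), hadjxy.symm⟩ with hdyx
      have h1 : v dxy = 0 := hPx dxy x.2 y.2 (Or.inl rfl)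
      have h2 : v dyx = 0 := hPx dyx y.2 x.2 (Or.inr rfl)
      have h3 : v dzy = 0 := by
        have hrel := key_rel (da := dxy) (db := dzy) (e := dyx) hker hsupp hxz hNy' rfl rfl rfl
        rw [h2, mul_zero, h1] at hrel
        have hsnd : dyx.snd = (↑x : V) := rfl
        rw [hsnd] at hrel
        rw [if_neg (by simp), if_pos hz, zero_add] at hrel
        exact hrel.symm
      intro e he1 he2 hor
      rcases hor with h | h
      · exact dart_out_zero (da := dxy) (db := dzy) hμ0 hker hsupp hxz hNy' rfl rfl h1 h3 h
      · rcases dart_into_classify (dc := dxy) (dd := dzy) hNy' rfl rfl he1 h with h' | h'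
        · rw [h']; exact h1
        · rw [h']; exact h3
    have hPall : ∀ y : C, P y := by
      intro y
      have hreach := hcyc.1.preconnected ⟨u, hu⟩ y
      exact hreach.elim fun p => walk_induct hstep p hPu
    have hvz : v = 0 := by
      funext e
      by_cases h1 : e.fst ∈ C
      · by_cases h2 : e.snd ∈ C
        · exact hPall ⟨e.fst, h1⟩ e h1 h2 (Or.inl rfl)
        · exact hsupp e (Or.inr h2)
      · exact hsupp e (Or.inl h1)
    exact Subtype.ext hvz
  calc Module.finrank ℂ S ≤ Module.finrank ℂ ℂ :=
        LinearMap.finrank_le_finrank_of_injective hinj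
    _ = 1 := Module.finrank_self ℂ
end
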